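/- arXiv:1409.2810 — 10 statements merged into one kernel-verified Lean document; each statement's English description precedes it below -/
import Mathlib

section
/- Let E and F be equivalence relations on sets X and Y respectively. If for every cardinal κ the number of E-classes of cardinality at least κ is at most the number of F-classes of cardinality at least κ, then there exists an injective function φ : X → Y such that for all x, x' ∈ X, x E x' if and only if φ(x) F φ(x'). -/
universe u

/-- The set of equivalence classes of `E`. -/
def EqClasses {X : Type u} (E : X → X → Prop) : Set (Set X) :=
  {C | ∃ x, C = {y | E x y}}

/-- The number of `E`-classes of cardinality exactly `κ`. -/
noncomputable def nEq {X : Type u} (E : X → X → Prop) (κ : Cardinal.{u}) : Cardinal.{u} :=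
  Cardinal.mk {C : Set X // C ∈ EqClasses E ∧ Cardinal.mk C = κ}

/-- The number of `E`-classes of cardinality at most `κ`. -/
noncomputable def nLe {X : Type u} (E : X → X → Prop) (κ : Cardinal.{u}) : Cardinal.{u} :=
  Cardinal.mk {C : Set X // C ∈ EqClasses E ∧ Cardinal.mk C ≤ κ}

/-- The number of `E`-classes of cardinality at least `κ`. -/
noncomputable def nGe {X : Type u} (E : X → X → Prop) (κ : Cardinal.{u}) : Cardinal.{u} :=
  Cardinal.mk {C : Set X // C ∈ EqClasses E ∧ κ ≤ Cardinal.mk C}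

open Cardinal Set in
instance (priority := 1001) aux_isWellOrder_toType (o : Ordinal.{u}) :
    IsWellOrder o.ToType (· < ·) :=
  isWellOrder_lt

open Cardinal Set in
theorem key_lemma {I J : Type u} (a : I → Cardinal.{u}) (b : J → Cardinal.{u})
    (hyp : ∀ κ : Cardinal.{u},
      Cardinal.mk {i // κ ≤ a i} ≤ Cardinal.mk {j // κ ≤ b j}) :
    ∃ g : I → J, Function.Injective g ∧ ∀ i, a i ≤ b (g i) := by
  classical
  set T : I → Set I := fun i => {i' | a i ≤ a i'} with hT
  set μ : I → Cardinal.{u} := fun i => #(T i) with hμdef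
  have hmono : ∀ {i i' : I}, a i ≤ a i' → μ i' ≤ μ i := by
    intro i i' h
    exact Cardinal.mk_le_mk_of_subset fun x hx => le_trans h hx
  have hrev : ∀ {i i' : I}, μ i' < μ i → a i < a i' := by
    intro i i' h
    by_contra hc
    exact absurd (hmono (not_lt.mp hc)) (not_le.mpr h)
  have hpos : ∀ i, 0 < μ i := by
    intro i
    rw [pos_iff_ne_zero]
    exact Cardinal.mk_ne_zero_iff.mpr ⟨⟨i, show a i ≤ a i from le_rfl⟩⟩
  -- Lower sets
  set Lo : I → Set I := fun i => {i' | μ i' < μ i} with hLo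
  have hu : ∀ i, #(Lo i) < μ i := by
    intro i
    rcases Set.eq_empty_or_nonempty (Lo i) with he | ⟨i₀, hi₀⟩
    · rw [he]
      simpa using hpos i
    · have hA : (a '' Lo i).Nonempty := ⟨a i₀, ⟨i₀, hi₀, rfl⟩⟩
      obtain ⟨m, hmA, hmin⟩ := Cardinal.lt_wf.has_min _ hA
      obtain ⟨i₁, hi₁, rfl⟩ := hmA
      have hsub : Lo i ⊆ T i₁ := by
        intro i' hi'
        exact le_of_not_gt (hmin (a i') ⟨i', hi', rfl⟩)
      exact lt_of_le_of_lt (Cardinal.mk_le_mk_of_subset hsub) hi₁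
  -- Levels
  set L : Cardinal.{u} → Set I := fun m => {i' | μ i' = m} with hL
  have hul : ∀ i, #(Lo i) + #(L (μ i)) ≤ μ i := by
    intro i
    have hA : (a '' L (μ i)).Nonempty := ⟨a i, ⟨i, rfl, rfl⟩⟩
    obtain ⟨m, hmA, hmin⟩ := Cardinal.lt_wf.has_min _ hA
    obtain ⟨i₂, hi₂, rfl⟩ := hmA
    have hsub : Lo i ∪ L (μ i) ⊆ T i₂ := by
      rintro i' (hi' | hi')
      · exact le_of_lt (hrev (by rw [hi₂]; exact hi'))
      · exact le_of_not_gt (hmin (a i') ⟨i', hi', rfl⟩)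
    have hdisj : Disjoint (Lo i) (L (μ i)) := by
      rw [Set.disjoint_left]
      intro i' h1 h2
      exact absurd h2 (ne_of_lt h1)
    calc #(Lo i) + #(L (μ i)) = #((Lo i ∪ L (μ i) : Set I)) :=
          (Cardinal.mk_union_of_disjoint hdisj).symm
      _ ≤ #(T i₂) := Cardinal.mk_le_mk_of_subset hsub
      _ = μ i := hi₂
  -- enumerations of levels by initial ordinals
  have heq : ∀ m : Cardinal.{u}, Nonempty (↥(L m) ≃ (#(L m)).ord.ToType) := by
    intro m
    exact Cardinal.eq.mp (Cardinal.mk_ord_toType _).symm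
  set e : ∀ m : Cardinal.{u}, ↥(L m) ≃ (#(L m)).ord.ToType :=
    fun m => (heq m).some with he
  set pos : I → Ordinal.{u} :=
    fun i => Ordinal.typein (α := (#(L (μ i))).ord.ToType) (· < ·) (e (μ i) ⟨i, rfl⟩)
    with hpos'
  have possubst : ∀ (i' : I) (m : Cardinal.{u}) (h : i' ∈ L m),
      pos i' = Ordinal.typein (α := (#(L m)).ord.ToType) (· < ·) (e m ⟨i', h⟩) := by
    intro i' m h
    have h' : μ i' = m := h
    subst h'
    rfl
  have Pinj : ∀ i i' : I, μ i = μ i' → pos i = pos i' → i = i' := by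
    intro i i' h1 h2
    have h1' : i' ∈ L (μ i) := h1.symm
    rw [possubst i (μ i) rfl, possubst i' (μ i) h1'] at h2
    have h3 := Ordinal.typein_injective (α := (#(L (μ i))).ord.ToType) (· < ·) h2
    have h4 := (e (μ i)).injective h3
    exact congrArg Subtype.val h4
  -- the processing order
  set r : I → I → Prop :=
    fun i' i => μ i' < μ i ∨ (μ i' = μ i ∧ pos i' < pos i) with hr
  have hrwf : WellFounded r := by
    have hreq : r = InvImage (Prod.Lex ((· < ·) : Cardinal.{u} → _ → Prop)
        ((· < ·) : Ordinal.{u} → _ → Prop)) (fun i => (μ i, pos i)) := by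
      funext i' i
      simp only [hr, InvImage, Prod.lex_def]
    rw [hreq]
    exact InvImage.wf _ (WellFounded.prod_lex Cardinal.lt_wf Ordinal.lt_wf)
  have htri : ∀ i i' : I, i ≠ i' → r i i' ∨ r i' i := by
    intro i i' hne
    rcases lt_trichotomy (μ i) (μ i') with h | h | h
    · exact Or.inl (Or.inl h)
    · rcases lt_trichotomy (pos i) (pos i') with h2 | h2 | h2
      · exact Or.inl (Or.inr ⟨h, h2⟩)
      · exact absurd (Pinj i i' h h2) hne
      · exact Or.inr (Or.inr ⟨h.symm, h2⟩)
    · exact Or.inr (Or.inl h)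
  -- counting predecessors
  have hcount : ∀ i, #{i' | r i' i} < μ i := by
    intro i
    set S2 : Set I := {i' | μ i' = μ i ∧ pos i' < pos i} with hS2
    have hsplit : {i' | r i' i} = Lo i ∪ S2 := rfl
    have hS2lt : #S2 < #(L (μ i)) := by
      set x : (#(L (μ i))).ord.ToType := e (μ i) ⟨i, rfl⟩ with hx
      have hmap : ∀ i' : S2, e (μ i) ⟨i'.1, i'.2.1⟩ < x := by
        rintro ⟨i', h1, h2⟩
        rw [possubst i' (μ i) h1, possubst i (μ i) rfl] at h2
        exact (Ordinal.typein_lt_typein (α := (#(L (μ i))).ord.ToType) (· < ·)).mp h2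
      have hinj : Function.Injective
          (fun i' : S2 => (⟨e (μ i) ⟨i'.1, i'.2.1⟩, hmap i'⟩ : Set.Iio x)) := by
        intro p q hpq
        have h5 : e (μ i) ⟨p.1, p.2.1⟩ = e (μ i) ⟨q.1, q.2.1⟩ :=
          congrArg Subtype.val hpq
        have h6 := (e (μ i)).injective h5
        have h7 : (p : I) = (q : I) := Subtype.mk_eq_mk.mp h6
        exact Subtype.ext h7
      exact lt_of_le_of_lt (Cardinal.mk_le_of_injective hinj)
        (Cardinal.mk_Iio_ord_toType x)
    have hle : #{i' | r i' i} ≤ #(Lo i) + #S2 := by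
      rw [hsplit]
      exact Cardinal.mk_union_le _ _
    have hfin : #(Lo i) + #S2 < μ i := by
      rcases le_or_gt ℵ₀ (μ i) with hinf | hfi
      · refine Cardinal.add_lt_of_lt hinf (hu i) ?_
        exact lt_of_lt_of_le hS2lt (le_trans le_add_self (hul i))
      · have h1 : #(Lo i) < ℵ₀ := lt_trans (hu i) hfi
        have h2 : #(L (μ i)) < ℵ₀ :=
          lt_of_le_of_lt (le_trans le_add_self (hul i)) hfi
        have h3 : #S2 < ℵ₀ := lt_trans hS2lt h2
        obtain ⟨nu, hnu⟩ := Cardinal.lt_aleph0.mp h1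
        obtain ⟨nl, hnl⟩ := Cardinal.lt_aleph0.mp h2
        obtain ⟨np, hnp⟩ := Cardinal.lt_aleph0.mp h3
        obtain ⟨nm, hnm⟩ := Cardinal.lt_aleph0.mp hfi
        have hul' := hul i
        have hS2' := hS2lt
        rw [hnu, hnl, hnm, ← Nat.cast_add, Nat.cast_le] at hul'
        rw [hnp, hnl, Nat.cast_lt] at hS2'
        rw [hnu, hnp, hnm, ← Nat.cast_add, Nat.cast_lt]
        omega
    exact lt_of_le_of_lt hle hfin
  -- greedy step
  have hstep : ∀ (i : I) (f : ∀ i', r i' i → J),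
      ∃ j : J, a i ≤ b j ∧ ∀ (i') (h : r i' i), f i' h ≠ j := by
    intro i f
    by_contra hc
    push_neg at hc
    have hF : ∀ j : {j // a i ≤ b j}, ∃ p : {i' // r i' i}, f p.1 p.2 = j.1 := by
      rintro ⟨j, hj⟩
      obtain ⟨i', h', hf⟩ := hc j hj
      exact ⟨⟨i', h'⟩, hf⟩
    choose F hFspec using hF
    have hFinj : Function.Injective F := by
      intro j1 j2 h
      refine Subtype.ext ?_
      rw [← hFspec j1, ← hFspec j2, h]
    have h1 : #{j // a i ≤ b j} ≤ #{i' // r i' i} := Cardinal.mk_le_of_injective hFinj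
    have h2 : μ i ≤ #{j // a i ≤ b j} := hyp (a i)
    have h3 : #{i' // r i' i} < μ i := hcount i
    exact absurd (le_trans h2 h1) (not_le.mpr h3)
  -- greedy construction
  set g : I → J := hrwf.fix (fun i f => (hstep i f).choose) with hg
  have hfix : ∀ i, g i = (hstep i (fun i' _ => g i')).choose := fun i =>
    hrwf.fix_eq _ i
  have spec : ∀ i, a i ≤ b (g i) ∧ ∀ (i') (h : r i' i), g i' ≠ g i := by
    intro i
    have hs := (hstep i (fun i' _ => g i')).choose_spec
    rw [← hfix i] at hs
    exact hs
  refine ⟨g, ?_, fun i => (spec i).1⟩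
  intro x y hxy
  by_contra hne
  rcases htri x y hne with h | h
  · exact (spec y).2 x h hxy
  · exact (spec x).2 y h hxy.symm

open Cardinal Set in
theorem stmt2 {X Y : Type u} (E : X → X → Prop) (F : Y → Y → Prop)
    (hE : Equivalence E) (hF : Equivalence F)
    (h : ∀ κ : Cardinal.{u}, nGe E κ ≤ nGe F κ) :
    ∃ φ : X → Y, Function.Injective φ ∧ ∀ x x' : X, E x x' ↔ F (φ x) (φ x') := by
  classical
  set a : {C : Set X // C ∈ EqClasses E} → Cardinal.{u} := fun C => #C.1 with ha
  set b : {D : Set Y // D ∈ EqClasses F} → Cardinal.{u} := fun D => #D.1 with hb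
  have hyp : ∀ κ : Cardinal.{u}, #{i // κ ≤ a i} ≤ #{j // κ ≤ b j} := by
    intro κ
    have h1 : #{i : {C : Set X // C ∈ EqClasses E} // κ ≤ a i} = nGe E κ :=
      Cardinal.mk_congr (Equiv.subtypeSubtypeEquivSubtypeInter
        (fun C : Set X => C ∈ EqClasses E) (fun C : Set X => κ ≤ #C))
    have h2 : #{j : {D : Set Y // D ∈ EqClasses F} // κ ≤ b j} = nGe F κ :=
      Cardinal.mk_congr (Equiv.subtypeSubtypeEquivSubtypeInter
        (fun D : Set Y => D ∈ EqClasses F) (fun D : Set Y => κ ≤ #D))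
    rw [h1, h2]
    exact h κ
  obtain ⟨g, hginj, hgle⟩ := key_lemma a b hyp
  have hemb : ∀ C : {C : Set X // C ∈ EqClasses E},
      Nonempty (C.1 ↪ (g C).1) := fun C => Cardinal.le_def _ _ |>.mp (hgle C)
  set emb : ∀ C : {C : Set X // C ∈ EqClasses E}, C.1 ↪ (g C).1 :=
    fun C => (hemb C).some with hembdef
  have hne : ∀ D : {D : Set Y // D ∈ EqClasses F}, D.1.Nonempty := by
    rintro ⟨D, y0, rfl⟩
    exact ⟨y0, hF.refl y0⟩
  set cls : X → {C : Set X // C ∈ EqClasses E} :=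
    fun x => ⟨{y | E x y}, ⟨x, rfl⟩⟩ with hclsdef
  have hcls_eq : ∀ {x x' : X}, E x x' → cls x = cls x' := by
    intro x x' hxx
    apply Subtype.ext
    ext y
    exact ⟨fun hy => hE.trans (hE.symm hxx) hy, fun hy => hE.trans hxx hy⟩
  have hmem : ∀ x : X, x ∈ (cls x).1 := fun x => hE.refl x
  set ψ : (C : {C : Set X // C ∈ EqClasses E}) → X → Y :=
    fun C x => if hx : x ∈ C.1 then (emb C ⟨x, hx⟩ : Y) else (hne (g C)).choose
    with hψdef
  have hψmem : ∀ C x, ψ C x ∈ (g C).1 := by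
    intro C x
    simp only [hψdef]
    split_ifs with hx
    · exact (emb C ⟨x, hx⟩).2
    · exact (hne (g C)).choose_spec
  have classF : ∀ (D : {D : Set Y // D ∈ EqClasses F}) (y : Y),
      y ∈ D.1 → D.1 = {z | F y z} := by
    rintro ⟨D, y0, rfl⟩ y hy
    have hy' : F y0 y := hy
    simp only
    ext z
    exact ⟨fun hz => hF.trans (hF.symm hy') hz, fun hz => hF.trans hy' hz⟩
  have forward : ∀ x x' : X, E x x' → F (ψ (cls x) x) (ψ (cls x') x') := by
    intro x x' hxx
    have hc : cls x = cls x' := hcls_eq hxx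
    have m1 : ψ (cls x) x ∈ (g (cls x)).1 := hψmem _ _
    have m2 : ψ (cls x') x' ∈ (g (cls x)).1 := by rw [hc]; exact hψmem _ _
    have hD := classF (g (cls x)) (ψ (cls x) x) m1
    rw [hD] at m2
    exact m2
  have backward : ∀ x x' : X, F (ψ (cls x) x) (ψ (cls x') x') → E x x' := by
    intro x x' hFf
    have m1 : ψ (cls x) x ∈ (g (cls x)).1 := hψmem _ _
    have m2 : ψ (cls x') x' ∈ (g (cls x')).1 := hψmem _ _
    have h1 := classF (g (cls x)) (ψ (cls x) x) m1
    have h2 := classF (g (cls x')) (ψ (cls x') x') m2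
    have h3 : {z | F (ψ (cls x) x) z} = {z | F (ψ (cls x') x') z} := by
      ext z
      exact ⟨fun hz => hF.trans (hF.symm hFf) hz, fun hz => hF.trans hFf hz⟩
    have hgg : g (cls x) = g (cls x') := Subtype.ext (h1.trans (h3.trans h2.symm))
    have hcc : cls x = cls x' := hginj hgg
    have hx' : x' ∈ (cls x).1 := by rw [hcc]; exact hmem x'
    exact hx'
  refine ⟨fun x => ψ (cls x) x, ?_, fun x x' => ⟨forward x x', backward x x'⟩⟩
  intro x x' hphi
  have hφ : ψ (cls x) x = ψ (cls x') x' := hphi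
  have hFf : F (ψ (cls x) x) (ψ (cls x') x') := by rw [hφ]; exact hF.refl _
  have hxx : E x x' := backward x x' hFf
  have hc : cls x = cls x' := hcls_eq hxx
  have hx'mem : x' ∈ (cls x).1 := by rw [hc]; exact hmem x'
  have e1 : ψ (cls x) x = (emb (cls x) ⟨x, hmem x⟩ : Y) := dif_pos (hmem x)
  have e2 : ψ (cls x') x' = (emb (cls x) ⟨x', hx'mem⟩ : Y) := by
    rw [← hc]
    exact dif_pos hx'mem
  rw [e1, e2] at hφ
  have h4 := Subtype.coe_injective hφ
  have h5 := (emb (cls x)).injective h4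
  exact Subtype.mk_eq_mk.mp h5
end

section
/- Let κ be an infinite cardinal. The class A of ordinals that can be partitioned into κ many cofinal subsets is closed: if γ is a limit of ordinals in A, then γ ∈ A. -/
universe u

/-- `γ` can be partitioned into `κ` many pairwise disjoint subsets, each cofinal in `γ`. -/
def CanPartition (γ : Ordinal.{u}) (κ : Cardinal.{u}) : Prop :=
  ∃ (ι : Type u) (P : ι → Set Ordinal.{u}),
    Cardinal.mk ι = κ ∧
    Pairwise (fun i j => Disjoint (P i) (P j)) ∧
    (⋃ i, P i) = Set.Iio γ ∧
    ∀ i, ∀ ξ < γ, ∃ η ∈ P i, ξ ≤ η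

theorem stmt3 (κ : Cardinal.{u}) (hκ : Cardinal.aleph0 ≤ κ) (γ : Ordinal.{u})
    (hne : ({δ : Ordinal.{u} | CanPartition δ κ} ∩ Set.Iio γ).Nonempty)
    (hsup : sSup ({δ : Ordinal.{u} | CanPartition δ κ} ∩ Set.Iio γ) = γ) :
    CanPartition γ κ := by
  set S := {δ : Ordinal.{u} | CanPartition δ κ} ∩ Set.Iio γ with hSdef
  set ι := κ.out with hι
  have key : ∀ δ : Ordinal.{u}, ∃ P : ι → Set Ordinal.{u},
      δ ∈ S → (Pairwise (fun i j => Disjoint (P i) (P j)) ∧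
        (⋃ i, P i) = Set.Iio δ ∧ ∀ i, ∀ ξ < δ, ∃ η ∈ P i, ξ ≤ η) := by
    intro δ
    by_cases hδ : δ ∈ S
    · obtain ⟨ι', P', hmk, hdisj, hun, hcof⟩ := hδ.1
      have hne2 : Nonempty (ι ≃ ι') := Cardinal.eq.mp (by rw [hmk, hι, Cardinal.mk_out])
      obtain ⟨e⟩ := hne2
      refine ⟨fun i => P' (e i), fun _ => ⟨?_, ?_, ?_⟩⟩
      · intro i j hij; exact hdisj (e.injective.ne hij)
      · rw [e.surjective.iUnion_comp]; exact hun
      · intro i ξ hξ; exact hcof (e i) ξ hξ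
    · exact ⟨fun _ => ∅, fun h => absurd h hδ⟩
  choose P hP using key
  have hne' : ∀ ξ < γ, {δ | δ ∈ S ∧ ξ < δ}.Nonempty := by
    intro ξ hξ
    by_contra h
    have hub : ∀ δ ∈ S, δ ≤ ξ := by
      intro δ hδ
      by_contra hlt
      exact h ⟨δ, hδ, lt_of_not_ge hlt⟩
    have : sSup S ≤ ξ := csSup_le hne hub
    rw [hsup] at this
    exact absurd hξ (not_lt.mpr this)
  set g : Ordinal.{u} → Ordinal.{u} := fun ξ => sInf {δ | δ ∈ S ∧ ξ < δ} with hg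
  have hgmem : ∀ ξ < γ, g ξ ∈ S ∧ ξ < g ξ := fun ξ hξ => csInf_mem (hne' ξ hξ)
  have hgle : ∀ ξ, ∀ δ ∈ S, ξ < δ → g ξ ≤ δ :=
    fun ξ δ h1 h2 => csInf_le (OrderBot.bddBelow _) ⟨h1, h2⟩
  refine ⟨ι, fun i => {ξ | ξ < γ ∧ ξ ∈ P (g ξ) i}, Cardinal.mk_out κ, ?_, ?_, ?_⟩
  · intro i j hij
    rw [Set.disjoint_left]
    rintro ξ ⟨hξγ, hξi⟩ ⟨_, hξj⟩
    have hdisj := ((hP (g ξ)) (hgmem ξ hξγ).1).1 hij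
    exact Set.disjoint_left.mp hdisj hξi hξj
  · ext ξ
    simp only [Set.mem_iUnion, Set.mem_setOf_eq, Set.mem_Iio]
    constructor
    · rintro ⟨i, hξγ, _⟩; exact hξγ
    · intro hξγ
      obtain ⟨hgS, hξg⟩ := hgmem ξ hξγ
      have hun := ((hP (g ξ)) hgS).2.1
      have : ξ ∈ ⋃ i, P (g ξ) i := by rw [hun]; exact hξg
      obtain ⟨i, hi⟩ := Set.mem_iUnion.mp this
      exact ⟨i, hξγ, hi⟩
  · intro i ξ hξγ
    obtain ⟨hgS, hξg⟩ := hgmem ξ hξγ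
    obtain ⟨hdisj, hun, hcof⟩ := (hP (g ξ)) hgS
    obtain ⟨η, hηP, hξη⟩ := hcof i ξ hξg
    have hηlt : η < g ξ := by
      have : η ∈ ⋃ j, P (g ξ) j := Set.mem_iUnion.mpr ⟨i, hηP⟩
      rw [hun] at this; exact this
    have hηγ : η < γ := hηlt.trans hgS.2
    have hgη : g η = g ξ := by
      obtain ⟨hgηS, hηgη⟩ := hgmem η hηγ
      have h1 : g η ≤ g ξ := hgle η (g ξ) hgS hηlt
      have h2 : g ξ ≤ g η := hgle ξ (g η) hgηS (lt_of_le_of_lt hξη hηgη)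
      exact le_antisymm h1 h2
    exact ⟨η, ⟨hηγ, by rw [hgη]; exact hηP⟩, hξη⟩
end

section
/- Let γ be an ordinal and κ an infinite cardinal. Then γ can be partitioned into κ many pairwise disjoint subsets, each cofinal in γ, if and only if γ = κ · α for some ordinal α (ordinal multiplication). -/
universe u

theorem stmt4 (γ : Ordinal.{u}) (κ : Cardinal.{u}) (hκ : Cardinal.aleph0 ≤ κ) :
    CanPartition γ κ ↔ ∃ α : Ordinal.{u}, γ = κ.ord * α := by
  have hκ0 : (0 : Ordinal.{u}) < κ.ord := by
    rw [Cardinal.lt_ord]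
    simpa using (Cardinal.aleph0_pos.trans_le hκ)
  constructor
  · rintro ⟨ι, P, hmk, hdisj, hunion, hcof⟩
    rcases eq_or_ne γ 0 with rfl | hγ
    · exact ⟨0, by simp⟩
    refine ⟨γ / κ.ord, ?_⟩
    -- key claim: every proper initial segment leaves room of size κ
    have key : ∀ β < γ, β + κ.ord ≤ γ := by
      intro β hβ
      have hchoice : ∀ i, ∃ η, η ∈ P i ∧ β ≤ η := fun i => by
        obtain ⟨η, hη, hle⟩ := hcof i β hβ; exact ⟨η, hη, hle⟩
      choose η hηP hηβ using hchoice
      have hηγ : ∀ i, η i < γ := by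
        intro i
        have : η i ∈ ⋃ j, P j := Set.mem_iUnion.2 ⟨i, hηP i⟩
        rw [hunion] at this; exact this
      have hpos : 0 < γ - β := by
        rw [pos_iff_ne_zero, ne_eq, Ordinal.sub_eq_zero_iff_le, not_le]
        exact hβ
      have hmap : ∀ i, η i - β < γ - β := by
        intro i
        exact Ordinal.sub_lt_of_lt_add (by
          rw [Ordinal.add_sub_cancel_of_le hβ.le]; exact hηγ i) hpos
      have hinjη : Function.Injective η := by
        intro i j hij
        by_contra hne
        exact (Set.disjoint_left.mp (hdisj hne)) (hηP i) (hij ▸ hηP j)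
      have hemb : Cardinal.lift.{u+1} (Cardinal.mk ι)
          ≤ Cardinal.lift.{u} (Cardinal.mk (Set.Iio (γ - β))) := by
        refine Cardinal.lift_mk_le'.mpr ⟨⟨fun i => ⟨η i - β, hmap i⟩, ?_⟩⟩
        intro i j hij
        apply hinjη
        have := congrArg Subtype.val hij
        simp only at this
        calc η i = β + (η i - β) := (Ordinal.add_sub_cancel_of_le (hηβ i)).symm
          _ = β + (η j - β) := by rw [this]
          _ = η j := Ordinal.add_sub_cancel_of_le (hηβ j)
      rw [hmk, Ordinal.mk_Iio_ordinal, Cardinal.lift_lift] at hemb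
      have hcard : κ ≤ (γ - β).card := by
        exact_mod_cast Cardinal.lift_le.mp hemb
      have : κ.ord ≤ γ - β :=
        le_trans (Cardinal.ord_le_ord.mpr hcard) (Cardinal.ord_card_le _)
      calc β + κ.ord ≤ β + (γ - β) := add_le_add_right this β
        _ = γ := Ordinal.add_sub_cancel_of_le hβ.le
    -- conclude divisibility
    have hmod : γ % κ.ord = 0 := by
      by_contra hne
      set β := κ.ord * (γ / κ.ord) with hβdef
      have hβγ : β + γ % κ.ord = γ := Ordinal.div_add_mod γ κ.ord
      have hβlt : β < γ := by
        rcases lt_or_eq_of_le (Ordinal.mul_div_le γ κ.ord) with h | h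
        · exact h
        · exfalso
          apply hne
          have h2 : β + γ % κ.ord = β + 0 := by
            rw [add_zero, hβγ]
            exact (hβdef.trans h).symm
          exact (add_right_inj β).mp h2
      have := key β hβlt
      rw [← hβγ, add_le_add_iff_left] at this
      exact absurd (Ordinal.mod_lt γ hκ0.ne') (not_lt.mpr this)
    conv_lhs => rw [← Ordinal.div_add_mod γ κ.ord, hmod, add_zero]
  · rintro ⟨α, rfl⟩
    haveI hne : Nonempty κ.ord.ToType := Ordinal.nonempty_toType_iff.2 hκ0.ne'
    have hmkι : Cardinal.mk κ.ord.ToType = κ := Cardinal.mk_ord_toType κ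
    rcases eq_or_ne α 0 with rfl | hα
    · refine ⟨κ.ord.ToType, fun _ => ∅, hmkι, fun i j _ => disjoint_bot_left, ?_, ?_⟩
      · simp only [Set.iUnion_empty, mul_zero]
        ext x
        simp
      · intro i ξ hξ
        simp [mul_zero] at hξ
    · -- main case
      set ι := κ.ord.ToType with hι
      obtain ⟨b⟩ : Nonempty (ι ≃ ι × ι) := by
        rw [← Cardinal.eq, Cardinal.mk_prod]
        simp [hmkι, Cardinal.mul_eq_self hκ]
      let e := Ordinal.ToType.mk (o := κ.ord)
      let g : Ordinal.{u} → ι := fun r =>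
        if h : r < κ.ord then (b (e ⟨r, h⟩)).1 else Classical.arbitrary ι
      refine ⟨ι, fun i => {ξ | ξ < κ.ord * α ∧ g (ξ % κ.ord) = i}, hmkι, ?_, ?_, ?_⟩
      · intro i j hij
        rw [Set.disjoint_left]
        rintro ξ ⟨_, hi⟩ ⟨_, hj⟩
        exact hij (hi ▸ hj ▸ rfl)
      · ext ξ
        simp only [Set.mem_iUnion, Set.mem_setOf_eq, Set.mem_Iio]
        exact ⟨fun ⟨i, h, _⟩ => h, fun h => ⟨g (ξ % κ.ord), h, rfl⟩⟩
      · intro i ξ hξ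
        set s := ξ % κ.ord with hs
        have hslt : s < κ.ord := Ordinal.mod_lt ξ hκ0.ne'
        -- there is t with s ≤ t < κ.ord and g t = i
        obtain ⟨t, hts, htκ, hgt⟩ : ∃ t, s ≤ t ∧ t < κ.ord ∧ g t = i := by
          by_contra hcon
          push_neg at hcon
          have hflt : ∀ x : ι, ((e.symm (b.symm (i, x)) : Set.Iio κ.ord) : Ordinal) < s := by
            intro x
            have h1 : ((e.symm (b.symm (i, x)) : Set.Iio κ.ord) : Ordinal) < κ.ord :=
              (e.symm (b.symm (i, x))).2
            have h2 : g ((e.symm (b.symm (i, x)) : Set.Iio κ.ord) : Ordinal) = i := by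
              simp only [g, dif_pos h1]
              have h3 : (⟨((e.symm (b.symm (i, x)) : Set.Iio κ.ord) : Ordinal), h1⟩ :
                  Set.Iio κ.ord) = e.symm (b.symm (i, x)) := Subtype.ext rfl
              rw [h3]
              simp
            by_contra hns
            push_neg at hns
            exact hcon _ hns h1 h2
          have hemb : Cardinal.lift.{u+1} (Cardinal.mk ι)
              ≤ Cardinal.lift.{u} (Cardinal.mk (Set.Iio s)) := by
            refine Cardinal.lift_mk_le'.mpr ⟨⟨fun x => ⟨_, Set.mem_Iio.mpr (hflt x)⟩, ?_⟩⟩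
            intro x y hxy
            have hv : ((e.symm (b.symm (i, x)) : Set.Iio κ.ord) : Ordinal)
                = ((e.symm (b.symm (i, y)) : Set.Iio κ.ord) : Ordinal) :=
              by simpa using congrArg Subtype.val hxy
            have : (i, x) = (i, y) := by
              have := e.symm.injective (Subtype.ext hv)
              exact b.symm.injective this
            exact (Prod.mk.injEq .. ▸ this).2
          rw [hmkι, Ordinal.mk_Iio_ordinal, Cardinal.lift_lift] at hemb
          have : κ ≤ s.card := by exact_mod_cast Cardinal.lift_le.mp hemb
          exact absurd (Cardinal.lt_ord.mp hslt) (not_lt.mpr this)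
        refine ⟨κ.ord * (ξ / κ.ord) + t, ⟨?_, ?_⟩, ?_⟩
        · have hq : ξ / κ.ord < α := (Ordinal.div_lt hκ0.ne').2 hξ
          calc κ.ord * (ξ / κ.ord) + t < κ.ord * (ξ / κ.ord) + κ.ord :=
                add_lt_add_right htκ _
            _ = κ.ord * Order.succ (ξ / κ.ord) := (Ordinal.mul_succ _ _).symm
            _ ≤ κ.ord * α := mul_le_mul_right (Order.succ_le_of_lt hq) _
        · rw [Ordinal.mul_add_mod_self, Ordinal.mod_eq_of_lt htκ, hgt]
        · conv_lhs => rw [← Ordinal.div_add_mod ξ κ.ord]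
          exact add_le_add_right hts _
end

section
/- Let E and F be equivalence relations on sets X and Y respectively. There exists an injective reduction φ from E to F whose range is F-invariant (an invariant embedding) if and only if for every cardinal κ, the number of E-classes of cardinality κ is at most the number of F-classes of cardinality κ. -/
universe u

/-- The `E`-class of `x`. -/
def cls {X : Type u} (E : X → X → Prop) (x : X) : Set X := {y | E x y}

lemma cls_mem {X : Type u} (E : X → X → Prop) (x : X) : cls E x ∈ EqClasses E := ⟨x, rfl⟩

lemma mem_cls_self {X : Type u} {E : X → X → Prop} (hE : Equivalence E) (x : X) :
    x ∈ cls E x := hE.refl x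

lemma cls_eq {X : Type u} {E : X → X → Prop} (hE : Equivalence E) {x x' : X}
    (h : E x x') : cls E x = cls E x' :=
  Set.ext fun z => ⟨fun hz => hE.trans (hE.symm h) hz, fun hz => hE.trans h hz⟩

lemma eqcl_rel {X : Type u} {E : X → X → Prop} (hE : Equivalence E) {C : Set X}
    (hC : C ∈ EqClasses E) {a b : X} (ha : a ∈ C) (hb : b ∈ C) : E a b := by
  obtain ⟨x, rfl⟩ := hC
  exact hE.trans (hE.symm ha) hb

lemma eqcl_eq_cls {X : Type u} {E : X → X → Prop} (hE : Equivalence E) {C : Set X}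
    (hC : C ∈ EqClasses E) {a : X} (ha : a ∈ C) : C = cls E a := by
  obtain ⟨x, rfl⟩ := hC
  exact cls_eq hE ha

theorem stmt7 {X Y : Type u} (E : X → X → Prop) (F : Y → Y → Prop)
    (hE : Equivalence E) (hF : Equivalence F) :
    (∃ φ : X → Y, Function.Injective φ ∧ (∀ x x' : X, E x x' ↔ F (φ x) (φ x')) ∧
        (∀ y y' : Y, y ∈ Set.range φ → F y y' → y' ∈ Set.range φ)) ↔
      ∀ κ : Cardinal.{u}, nEq E κ ≤ nEq F κ := by
  classical
  constructor
  · rintro ⟨φ, hinj, hred, hinv⟩ κ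
    have rep : ∀ C : {C : Set X // C ∈ EqClasses E ∧ Cardinal.mk C = κ},
        ∃ x : X, C.1 = cls E x := fun C => C.2.1
    choose r hr using rep
    have hbij : ∀ C : {C : Set X // C ∈ EqClasses E ∧ Cardinal.mk C = κ},
        Cardinal.mk (cls F (φ (r C))) = κ := by
      intro C
      have e : ↥C.1 ≃ ↥(cls F (φ (r C))) := by
        refine Equiv.ofBijective
          (fun a => ⟨φ a.1, (hred (r C) a.1).1 (show (a : X) ∈ cls E (r C) from (hr C) ▸ a.2)⟩)
          ⟨?_, ?_⟩
        · intro a b hab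
          exact Subtype.ext (hinj (congrArg Subtype.val hab))
        · rintro ⟨z, hz⟩
          obtain ⟨w, rfl⟩ := hinv (φ (r C)) z ⟨r C, rfl⟩ hz
          have hw : E (r C) w := (hred (r C) w).2 hz
          refine ⟨⟨w, ?_⟩, rfl⟩
          rw [hr C]; exact hw
      rw [← C.2.2]
      exact (Cardinal.mk_congr e).symm
    refine Cardinal.mk_le_of_injective (f :=
      fun C => ⟨cls F (φ (r C)), cls_mem F _, hbij C⟩) ?_
    intro C C' hCC'
    have hset : cls F (φ (r C)) = cls F (φ (r C')) := congrArg Subtype.val hCC'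
    have hmem : φ (r C') ∈ cls F (φ (r C)) := by
      rw [hset]; exact mem_cls_self hF _
    have hrel : E (r C) (r C') := (hred _ _).2 hmem
    apply Subtype.ext
    rw [hr C, hr C', cls_eq hE hrel]
  · intro h
    have hf : ∀ κ : Cardinal.{u},
        Nonempty ({C : Set X // C ∈ EqClasses E ∧ Cardinal.mk C = κ} ↪
          {C : Set Y // C ∈ EqClasses F ∧ Cardinal.mk C = κ}) := fun κ =>
      Cardinal.le_def _ _ |>.1 (h κ)
    let f : ∀ κ : Cardinal.{u}, {C : Set X // C ∈ EqClasses E ∧ Cardinal.mk C = κ} ↪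
        {C : Set Y // C ∈ EqClasses F ∧ Cardinal.mk C = κ} := fun κ => (hf κ).some
    let GD : ∀ C : Set X, C ∈ EqClasses E → Set Y :=
      fun C hC => (f (Cardinal.mk C) ⟨C, hC, rfl⟩).1
    have GD_mem : ∀ C hC, GD C hC ∈ EqClasses F := fun C hC =>
      (f (Cardinal.mk C) ⟨C, hC, rfl⟩).2.1
    have GD_mk : ∀ C hC, Cardinal.mk (GD C hC) = Cardinal.mk C := fun C hC =>
      (f (Cardinal.mk C) ⟨C, hC, rfl⟩).2.2
    have fcast : ∀ (κ κ' : Cardinal.{u}) (e : κ = κ') (C : Set X) (hC : C ∈ EqClasses E)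
        (h1 : Cardinal.mk C = κ),
        (f κ ⟨C, hC, h1⟩).1 = (f κ' ⟨C, hC, h1.trans e⟩).1 := by
      rintro κ κ' rfl C hC h1; rfl
    have GD_inj : ∀ C hC C' hC', GD C hC = GD C' hC' → C = C' := by
      intro C hC C' hC' hh
      have e : Cardinal.mk C' = Cardinal.mk C := by
        rw [← GD_mk C hC, ← GD_mk C' hC', hh]
      have hh' : (f (Cardinal.mk C) ⟨C, hC, rfl⟩).1 =
          (f (Cardinal.mk C') ⟨C', hC', rfl⟩).1 := hh
      have h2 : (f (Cardinal.mk C) ⟨C, hC, rfl⟩).1 =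
          (f (Cardinal.mk C) ⟨C', hC', e⟩).1 :=
        hh'.trans (fcast _ _ e C' hC' rfl)
      have := (f (Cardinal.mk C)).injective (Subtype.ext h2)
      exact congrArg Subtype.val this
    have gcast : ∀ (C C' : Set X) (e : C = C') (hC : C ∈ EqClasses E),
        GD C hC = GD C' (e ▸ hC) := by
      rintro C C' rfl hC; rfl
    let ec : ∀ (C : Set X) (hC : C ∈ EqClasses E), ↥C ≃ ↥(GD C hC) :=
      fun C hC => (Cardinal.eq.1 (GD_mk C hC)).some.symm
    have ecast : ∀ (C C' : Set X) (e : C = C') (hC : C ∈ EqClasses E) (x : X)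
        (hx : x ∈ C), ((ec C hC ⟨x, hx⟩ : ↥(GD C hC)) : Y) =
          ((ec C' (e ▸ hC) ⟨x, e ▸ hx⟩ : ↥(GD C' (e ▸ hC))) : Y) := by
      rintro C C' rfl hC x hx; rfl
    let φ : X → Y := fun x => (ec (cls E x) (cls_mem E x) ⟨x, hE.refl x⟩ : Y)
    have memφ : ∀ x, φ x ∈ GD (cls E x) (cls_mem E x) := fun x =>
      (ec (cls E x) (cls_mem E x) ⟨x, hE.refl x⟩).2
    -- the reduction property
    have hred : ∀ x x' : X, E x x' ↔ F (φ x) (φ x') := by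
      intro x x'
      constructor
      · intro hxx'
        have e : cls E x' = cls E x := cls_eq hE (hE.symm hxx')
        have egd : GD (cls E x') (cls_mem E x') = GD (cls E x) (cls_mem E x) :=
          gcast _ _ e (cls_mem E x')
        have hm : φ x' ∈ GD (cls E x) (cls_mem E x) := egd ▸ memφ x'
        exact eqcl_rel hF (GD_mem (cls E x) (cls_mem E x)) (memφ x) hm
      · intro hFf
        have h1 : GD (cls E x) (cls_mem E x) = cls F (φ x') := by
          have hcls : GD (cls E x) (cls_mem E x) = cls F (φ x) :=
            eqcl_eq_cls hF (GD_mem (cls E x) (cls_mem E x)) (memφ x)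
          have hm : φ x' ∈ GD (cls E x) (cls_mem E x) := by rw [hcls]; exact hFf
          exact eqcl_eq_cls hF (GD_mem (cls E x) (cls_mem E x)) hm
        have h2 : GD (cls E x') (cls_mem E x') = cls F (φ x') :=
          eqcl_eq_cls hF (GD_mem (cls E x') (cls_mem E x')) (memφ x')
        have := GD_inj (cls E x) (cls_mem E x) (cls E x') (cls_mem E x') (h1.trans h2.symm)
        have hx' : x' ∈ cls E x := this ▸ mem_cls_self hE x'
        exact hx'
    refine ⟨φ, ?_, hred, ?_⟩
    · intro x x' hxy
      have hexx' : E x x' := (hred x x').2 (hxy ▸ hF.refl (φ x))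
      have e : cls E x' = cls E x := cls_eq hE (hE.symm hexx')
      have h2 : φ x' = ((ec (cls E x) (cls_mem E x) ⟨x', e ▸ hE.refl x'⟩ :
          ↥(GD (cls E x) (cls_mem E x))) : Y) :=
        ecast (cls E x') (cls E x) e (cls_mem E x') x' (hE.refl x')
      have : (ec (cls E x) (cls_mem E x) ⟨x, hE.refl x⟩ : ↥(GD (cls E x) (cls_mem E x))) =
          ec (cls E x) (cls_mem E x) ⟨x', e ▸ hE.refl x'⟩ := by
        apply Subtype.ext
        rw [← h2]
        exact hxy
      have := (ec (cls E x) (cls_mem E x)).injective this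
      exact congrArg Subtype.val this
    · rintro y y' ⟨x, rfl⟩ hyy'
      have hD : GD (cls E x) (cls_mem E x) = cls F (φ x) :=
        eqcl_eq_cls hF (GD_mem (cls E x) (cls_mem E x)) (memφ x)
      have hy'D : y' ∈ GD (cls E x) (cls_mem E x) := by rw [hD]; exact hyy'
      obtain ⟨⟨x'', hx''⟩, hxim⟩ := (ec (cls E x) (cls_mem E x)).surjective ⟨y', hy'D⟩
      refine ⟨x'', ?_⟩
      have hExx'' : E x x'' := hx''
      have e : cls E x'' = cls E x := cls_eq hE (hE.symm hExx'')
      have h2 : φ x'' = ((ec (cls E x) (cls_mem E x) ⟨x'', e ▸ hE.refl x''⟩ :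
          ↥(GD (cls E x) (cls_mem E x))) : Y) :=
        ecast (cls E x'') (cls E x) e (cls_mem E x'') x'' (hE.refl x'')
      rw [h2]
      exact congrArg Subtype.val hxim
end

section
/- Let E and F be equivalence relations such that E has exactly one class of size n for each finite n ≥ 1 and exactly one class of size ℵ₀ (and no others), while F has exactly one class of size n for each finite n ≥ 1 (and no others). Then for every cardinal κ, n_{≤κ}(E) ≤ n_{≤κ}(F) and n_{≥κ}(E) ≥ n_{≥κ}(F), but there is no reduction from E to F whose range is F-invariant. -/
universe u

section Stmt11Aux

variable {X : Type u}

lemma stmt11_cls_eq_iff {E : X → X → Prop} (hE : Equivalence E) {x x' : X} :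
    ({y | E x y} : Set X) = {y | E x' y} ↔ E x x' := by
  constructor
  · intro h
    have hx' : x' ∈ ({y | E x y} : Set X) := by rw [h]; exact hE.refl x'
    exact hx'
  · intro h
    ext y
    exact ⟨fun hy => hE.trans (hE.symm h) hy, fun hy => hE.trans h hy⟩

lemma stmt11_nEq_one_exists {E : X → X → Prop} {κ : Cardinal.{u}} (h : nEq E κ = 1) :
    ∃ C : Set X, C ∈ EqClasses E ∧ Cardinal.mk C = κ := by
  have h0 : nEq E κ ≠ 0 := by rw [h]; exact one_ne_zero
  have : Nonempty {C : Set X // C ∈ EqClasses E ∧ Cardinal.mk C = κ} :=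
    Cardinal.mk_ne_zero_iff.mp h0
  obtain ⟨⟨C, h1, h2⟩⟩ := this
  exact ⟨C, h1, h2⟩

lemma stmt11_nEq_one_uniq {E : X → X → Prop} {κ : Cardinal.{u}} (h : nEq E κ = 1) {C C' : Set X}
    (hC : C ∈ EqClasses E) (hC' : C' ∈ EqClasses E) (h1 : Cardinal.mk C = κ)
    (h2 : Cardinal.mk C' = κ) : C = C' := by
  have hsub : Subsingleton {C : Set X // C ∈ EqClasses E ∧ Cardinal.mk C = κ} :=
    Cardinal.le_one_iff_subsingleton.mp h.le
  have := hsub.elim ⟨C, hC, h1⟩ ⟨C', hC', h2⟩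
  exact congrArg Subtype.val this

lemma stmt11_nEq_ne_zero {E : X → X → Prop} {C : Set X} (hC : C ∈ EqClasses E) :
    nEq E (Cardinal.mk C) ≠ 0 :=
  Cardinal.mk_ne_zero_iff.mpr ⟨⟨C, hC, rfl⟩⟩

end Stmt11Aux

theorem stmt11 {X Y : Type u} (E : X → X → Prop) (F : Y → Y → Prop)
    (hE : Equivalence E) (hF : Equivalence F)
    (hE1 : ∀ n : ℕ, 1 ≤ n → nEq E (n : Cardinal.{u}) = 1)
    (hE2 : nEq E Cardinal.aleph0 = 1)
    (hE3 : ∀ κ : Cardinal.{u}, (∀ n : ℕ, 1 ≤ n → κ ≠ (n : Cardinal.{u})) →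
        κ ≠ Cardinal.aleph0 → nEq E κ = 0)
    (hF1 : ∀ n : ℕ, 1 ≤ n → nEq F (n : Cardinal.{u}) = 1)
    (hF2 : ∀ κ : Cardinal.{u}, (∀ n : ℕ, 1 ≤ n → κ ≠ (n : Cardinal.{u})) → nEq F κ = 0) :
    (∀ κ : Cardinal.{u}, nLe E κ ≤ nLe F κ ∧ nGe F κ ≤ nGe E κ) ∧
      ¬ ∃ φ : X → Y, (∀ x x' : X, E x x' ↔ F (φ x) (φ x')) ∧
        ∀ y y' : Y, y ∈ Set.range φ → F y y' → y' ∈ Set.range φ := by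
  -- classification of class sizes
  have hFsize : ∀ D : Set Y, D ∈ EqClasses F →
      ∃ n : ℕ, 1 ≤ n ∧ Cardinal.mk D = (n : Cardinal) := by
    intro D hD
    by_contra hcon
    push_neg at hcon
    exact stmt11_nEq_ne_zero hD (hF2 _ (fun n hn => hcon n hn))
  have hEsize : ∀ C : Set X, C ∈ EqClasses E →
      Cardinal.mk C = Cardinal.aleph0 ∨ ∃ n : ℕ, 1 ≤ n ∧ Cardinal.mk C = (n : Cardinal) := by
    intro C hC
    by_contra hcon
    push_neg at hcon
    exact stmt11_nEq_ne_zero hC (hE3 _ (fun n hn => hcon.2 n hn) hcon.1)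
  have hEuniq : ∀ C C' : Set X, C ∈ EqClasses E → C' ∈ EqClasses E →
      Cardinal.mk C = Cardinal.mk C' → C = C' := by
    intro C C' hC hC' hmk
    rcases hEsize C hC with h | ⟨n, hn, h⟩
    · exact stmt11_nEq_one_uniq hE2 hC hC' h (hmk ▸ h)
    · exact stmt11_nEq_one_uniq (hE1 n hn) hC hC' h (hmk ▸ h)
  have hFuniq : ∀ D D' : Set Y, D ∈ EqClasses F → D' ∈ EqClasses F →
      Cardinal.mk D = Cardinal.mk D' → D = D' := by
    intro D D' hD hD' hmk
    obtain ⟨n, hn, h⟩ := hFsize D hD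
    exact stmt11_nEq_one_uniq (hF1 n hn) hD hD' h (hmk ▸ h)
  choose szF hszF1 hszF2 using hFsize
  have hEex : ∀ n : ℕ, 1 ≤ n → ∃ C : Set X, C ∈ EqClasses E ∧ Cardinal.mk C = (n : Cardinal) :=
    fun n hn => stmt11_nEq_one_exists (hE1 n hn)
  choose cE hcE1 hcE2 using hEex
  have hFex : ∀ n : ℕ, 1 ≤ n → ∃ D : Set Y, D ∈ EqClasses F ∧ Cardinal.mk D = (n : Cardinal) :=
    fun n hn => stmt11_nEq_one_exists (hF1 n hn)
  choose cF hcF1 hcF2 using hFex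
  constructor
  · intro κ
    constructor
    · -- nLe E κ ≤ nLe F κ
      rcases lt_or_ge κ Cardinal.aleph0 with hκ | hκ
      · -- finite κ
        have hsz : ∀ C : {C : Set X // C ∈ EqClasses E ∧ Cardinal.mk C ≤ κ},
            ∃ n : ℕ, 1 ≤ n ∧ Cardinal.mk C.1 = (n : Cardinal) := by
          rintro ⟨C, hC, hle⟩
          rcases hEsize C hC with h | hfin
          · exact absurd (h ▸ hle) (not_le.mpr hκ)
          · exact hfin
        choose s hs1 hs2 using hsz
        refine Cardinal.mk_le_of_injective
          (f := fun C => ⟨cF (s C) (hs1 C), hcF1 _ _, ?_⟩) ?_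
        · rw [hcF2, ← hs2 C]; exact C.2.2
        · intro C C' hCC'
          have h1 : cF (s C) (hs1 C) = cF (s C') (hs1 C') := congrArg Subtype.val hCC'
          have h2 : ((s C : ℕ) : Cardinal) = (s C' : ℕ) := by
            rw [← hcF2 (s C) (hs1 C), ← hcF2 (s C') (hs1 C'), h1]
          have h3 : Cardinal.mk C.1 = Cardinal.mk C'.1 := by rw [hs2 C, hs2 C', h2]
          exact Subtype.ext (hEuniq _ _ C.2.1 C'.2.1 h3)
      · -- infinite κ
        have hsz : ∀ C : {C : Set X // C ∈ EqClasses E ∧ Cardinal.mk C ≤ κ},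
            ∃ n : ℕ, 1 ≤ n ∧ ((Cardinal.mk C.1 = Cardinal.aleph0 ∧ n = 1) ∨
              ∃ k : ℕ, 1 ≤ k ∧ Cardinal.mk C.1 = (k : Cardinal) ∧ n = k + 1) := by
          rintro ⟨C, hC, -⟩
          rcases hEsize C hC with h | ⟨k, hk, h⟩
          · exact ⟨1, le_refl 1, Or.inl ⟨h, rfl⟩⟩
          · exact ⟨k + 1, by omega, Or.inr ⟨k, hk, h, rfl⟩⟩
        choose s hs1 hs2 using hsz
        refine Cardinal.mk_le_of_injective
          (f := fun C => ⟨cF (s C) (hs1 C), hcF1 _ _, ?_⟩) ?_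
        · rw [hcF2]; exact le_trans (Cardinal.nat_lt_aleph0 _).le hκ
        · intro C C' hCC'
          have h1 : cF (s C) (hs1 C) = cF (s C') (hs1 C') := congrArg Subtype.val hCC'
          have h2 : s C = s C' := Nat.cast_injective
            (by rw [← hcF2 (s C) (hs1 C), ← hcF2 (s C') (hs1 C'), h1])
          apply Subtype.ext
          apply hEuniq _ _ C.2.1 C'.2.1
          rcases hs2 C with ⟨ha, hn⟩ | ⟨k, hk1, hk, hn⟩ <;>
            rcases hs2 C' with ⟨ha', hn'⟩ | ⟨k', hk1', hk', hn'⟩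
          · rw [ha, ha']
          · exfalso; omega
          · exfalso; omega
          · have hkk' : k = k' := by omega
            rw [hk, hk', hkk']
    · -- nGe F κ ≤ nGe E κ
      refine Cardinal.mk_le_of_injective
        (f := fun D : {D : Set Y // D ∈ EqClasses F ∧ κ ≤ Cardinal.mk D} =>
          ⟨cE (szF D.1 D.2.1) (hszF1 _ _), hcE1 _ _, ?_⟩) ?_
      · rw [hcE2, ← hszF2 D.1 D.2.1]; exact D.2.2
      · intro D D' hDD'
        have h1 : cE (szF D.1 D.2.1) _ = cE (szF D'.1 D'.2.1) _ := congrArg Subtype.val hDD'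
        have h2 : ((szF D.1 D.2.1 : ℕ) : Cardinal) = (szF D'.1 D'.2.1 : ℕ) := by
          rw [← hcE2 (szF D.1 D.2.1) (hszF1 _ _), ← hcE2 (szF D'.1 D'.2.1) (hszF1 _ _), h1]
        have h3 : Cardinal.mk D.1 = Cardinal.mk D'.1 := by
          rw [hszF2 D.1 D.2.1, hszF2 D'.1 D'.2.1, h2]
        exact Subtype.ext (hFuniq _ _ D.2.1 D'.2.1 h3)
  · -- no reduction with F-invariant range
    rintro ⟨φ, hred, hinv⟩
    choose χ hχ using fun (y : Y) (hy : y ∈ Set.range φ) => hy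
    have key : ∀ x0 : X, Cardinal.mk {y | F (φ x0) y} ≤ Cardinal.mk {y' | E x0 y'} := by
      intro x0
      have hmem : ∀ y : {y | F (φ x0) y}, (y : Y) ∈ Set.range φ :=
        fun y => hinv (φ x0) y ⟨x0, rfl⟩ y.2
      have hE0 : ∀ y : {y | F (φ x0) y}, E x0 (χ y (hmem y)) := by
        intro y
        apply (hred x0 (χ y (hmem y))).mpr
        rw [hχ y (hmem y)]
        exact y.2
      apply Cardinal.mk_le_of_injective (f := fun y => ⟨χ y (hmem y), hE0 y⟩)
      intro y y' hyy'
      have h1 : χ y (hmem y) = χ y' (hmem y') := congrArg Subtype.val hyy'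
      apply Subtype.ext
      rw [← hχ y (hmem y), ← hχ y' (hmem y'), h1]
    obtain ⟨Cinf, hCinf, hmkinf⟩ := stmt11_nEq_one_exists hE2
    obtain ⟨xinf, rfl⟩ := hCinf
    have hgen : ∀ n : ℕ, 1 ≤ n → ∃ x : X, Cardinal.mk {y | E x y} = (n : Cardinal) := by
      intro n hn
      obtain ⟨C, hC, hmk⟩ := stmt11_nEq_one_exists (hE1 n hn)
      obtain ⟨x, rfl⟩ := hC
      exact ⟨x, hmk⟩
    choose xg hxg using hgen
    have hDinfmem : ({y | F (φ xinf) y} : Set Y) ∈ EqClasses F := ⟨φ xinf, rfl⟩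
    set m := szF {y | F (φ xinf) y} hDinfmem with hm
    have hm1 : 1 ≤ m := hszF1 _ _
    have hmmk : Cardinal.mk {y | F (φ xinf) y} = (m : Cardinal) := hszF2 _ _
    -- the indexed F-classes
    set s : Fin (m + 1) → ℕ := fun i =>
      if h : 1 ≤ i.val then szF {y | F (φ (xg i.val h)) y} ⟨φ (xg i.val h), rfl⟩ else m
      with hs
    have hsIcc : ∀ i : Fin (m + 1), s i ∈ Finset.Icc 1 m := by
      intro i
      by_cases h : 1 ≤ i.val
      · have hb : ((szF {y | F (φ (xg i.val h)) y} ⟨φ (xg i.val h), rfl⟩ : ℕ) : Cardinal)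
            ≤ (i.val : Cardinal) := by
          rw [← hszF2 _ ⟨φ (xg i.val h), rfl⟩, ← hxg i.val h]
          exact key (xg i.val h)
        have hb' : szF {y | F (φ (xg i.val h)) y} ⟨φ (xg i.val h), rfl⟩ ≤ i.val :=
          Nat.cast_le.mp hb
        have hiv : i.val ≤ m := by omega
        simp only [hs, dif_pos h, Finset.mem_Icc]
        exact ⟨hszF1 _ _, le_trans hb' hiv⟩
      · simp only [hs, dif_neg h, Finset.mem_Icc]
        exact ⟨hm1, le_refl m⟩
    -- the classes indexed by s are pairwise distinct
    have hsinj : Set.InjOn s ↑(Finset.univ : Finset (Fin (m + 1))) := by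
      intro i _ j _ hij
      -- classes with equal size are equal
      have hclseq : ∀ (a b : X), ({y | F (φ a) y} : Set Y) = {y | F (φ b) y} → E a b := by
        intro a b hab
        exact (hred a b).mpr ((stmt11_cls_eq_iff hF).mp hab)
      by_cases hi : 1 ≤ i.val <;> by_cases hj : 1 ≤ j.val
      · simp only [hs, dif_pos hi, dif_pos hj] at hij
        have hDeq : ({y | F (φ (xg i.val hi)) y} : Set Y) = {y | F (φ (xg j.val hj)) y} := by
          apply hFuniq _ _ ⟨φ (xg i.val hi), rfl⟩ ⟨φ (xg j.val hj), rfl⟩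
          rw [hszF2 _ ⟨φ (xg i.val hi), rfl⟩, hszF2 _ ⟨φ (xg j.val hj), rfl⟩, hij]
        have hEab : E (xg i.val hi) (xg j.val hj) := hclseq _ _ hDeq
        have hCeq : ({y | E (xg i.val hi) y} : Set X) = {y | E (xg j.val hj) y} :=
          (stmt11_cls_eq_iff hE).mpr hEab
        have : ((i.val : ℕ) : Cardinal) = (j.val : ℕ) := by
          rw [← hxg i.val hi, ← hxg j.val hj, hCeq]
        exact Fin.ext (Nat.cast_injective this)
      · -- j.val = 0 : s j = m, size of the class of φ xinf
        exfalso
        simp only [hs, dif_pos hi, dif_neg hj] at hij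
        have hDeq : ({y | F (φ (xg i.val hi)) y} : Set Y) = {y | F (φ xinf) y} := by
          apply hFuniq _ _ ⟨φ (xg i.val hi), rfl⟩ hDinfmem
          rw [hszF2 _ ⟨φ (xg i.val hi), rfl⟩, hmmk, hij]
        have hEab : E (xg i.val hi) xinf := hclseq _ _ hDeq
        have hCeq : ({y | E (xg i.val hi) y} : Set X) = {y | E xinf y} :=
          (stmt11_cls_eq_iff hE).mpr hEab
        have : ((i.val : ℕ) : Cardinal) = Cardinal.aleph0 := by
          rw [← hxg i.val hi, ← hmkinf, hCeq]
        exact (Cardinal.nat_lt_aleph0 i.val).ne this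
      · exfalso
        simp only [hs, dif_neg hi, dif_pos hj] at hij
        have hDeq : ({y | F (φ (xg j.val hj)) y} : Set Y) = {y | F (φ xinf) y} := by
          apply hFuniq _ _ ⟨φ (xg j.val hj), rfl⟩ hDinfmem
          rw [hszF2 _ ⟨φ (xg j.val hj), rfl⟩, hmmk]
          exact_mod_cast hij.symm
        have hEab : E (xg j.val hj) xinf := hclseq _ _ hDeq
        have hCeq : ({y | E (xg j.val hj) y} : Set X) = {y | E xinf y} :=
          (stmt11_cls_eq_iff hE).mpr hEab
        have : ((j.val : ℕ) : Cardinal) = Cardinal.aleph0 := by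
          rw [← hxg j.val hj, ← hmkinf, hCeq]
        exact (Cardinal.nat_lt_aleph0 j.val).ne this
      · exact Fin.ext (by omega)
    have hcard := Finset.card_le_card_of_injOn s (fun i _ => hsIcc i) hsinj
    simp only [Finset.card_univ, Fintype.card_fin, Nat.card_Icc] at hcard
    omega
end

section
/- Let E be an equivalence relation with exactly ℵ₀ many classes of size 1 and, for each countable limit ordinal α, exactly ℵ₀ many classes of size ℵ_α (and no other classes). Let F be an equivalence relation with exactly ℵ₀ many classes of size 1 and, for each countable limit ordinal α, exactly ℵ₀ many classes of size ℵ_{α+1} (and no other classes). Then there is no invariant reduction from E to F, i.e., no reduction φ from E to F whose range is F-invariant. -/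
universe u

open Cardinal in
theorem press_core (γ₀ : Ordinal.{u}) (b : Ordinal.{u} → Ordinal.{u})
    (hγ : γ₀ < (aleph 1).ord) (hb : ∀ β, b β < (aleph 1).ord)
    (H : ∀ α, α < (aleph 1).ord → Order.IsSuccLimit α → (α < γ₀ ∨ ∃ β, β < α ∧ α < b β)) :
    False := by
  have hcof : ((aleph 1).ord).cof = aleph 1 := Cardinal.isRegular_aleph_one.cof_eq
  -- iterate closure
  let g : ℕ → Ordinal.{u} := fun n => Nat.rec γ₀
    (fun _ p => max (p + 1) (Ordinal.bsup.{u,u} p (fun β _ => b β))) n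
  have hglt : ∀ n, g n < (aleph 1).ord := by
    intro n
    induction n with
    | zero => exact hγ
    | succ n ih =>
      refine max_lt ?_ ?_
      · rw [Ordinal.add_one_eq_succ]
        exact (Cardinal.isSuccLimit_ord (Cardinal.aleph0_le_aleph 1)).succ_lt ih
      · refine Ordinal.bsup_lt_ord ?_ (fun i hi => hb i)
        rw [hcof]; exact Cardinal.lt_ord.mp ih
  have hgmono : ∀ n, g n < g (n + 1) := by
    intro n
    calc g n < g n + 1 := by rw [Ordinal.add_one_eq_succ]; exact Order.lt_succ _
    _ ≤ g (n + 1) := le_max_left _ _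
  set A := ⨆ n : ULift.{u} ℕ, g n.down with hA
  have hle : ∀ n, g n ≤ A := fun n => Ordinal.le_iSup (fun n : ULift.{u} ℕ => g n.down) (ULift.up n)
  have hltA : ∀ n, g n < A := fun n => (hgmono n).trans_le (hle (n + 1))
  have hAlt : A < (aleph 1).ord := by
    refine Ordinal.iSup_lt_of_lt_cof ?_ (fun i => hglt i.down)
    rw [hcof]
    have : #(ULift.{u} ℕ) = ℵ₀ := by simp
    rw [this]; exact Cardinal.aleph0_lt_aleph_one
  have hexn : ∀ a, a < A → ∃ n, a < g n := by
    intro a ha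
    obtain ⟨i, hi⟩ := Ordinal.lt_iSup_iff.mp ha
    exact ⟨i.down, hi⟩
  have hAlim : Order.IsSuccLimit A := by
    rw [Ordinal.isSuccLimit_iff, Order.isSuccPrelimit_iff_succ_lt]
    constructor
    · intro h0
      exact absurd (h0 ▸ hltA 0) (not_lt_of_ge zero_le)
    · intro a ha
      obtain ⟨n, hn⟩ := hexn a ha
      exact (Order.succ_le_of_lt hn).trans_lt (hltA n)
  have hclosed : ∀ β, β < A → b β < A := by
    intro β hβ
    obtain ⟨n, hn⟩ := hexn β hβ
    calc b β ≤ Ordinal.bsup.{u,u} (g n) (fun β _ => b β) := Ordinal.le_bsup _ β hn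
    _ ≤ g (n + 1) := le_max_right _ _
    _ < A := hltA (n + 1)
  rcases H A hAlt hAlim with h | ⟨β, hβA, hAb⟩
  · exact absurd h (not_lt.mpr ((hltA 0).le))
  · exact absurd hAb (not_lt.mpr (hclosed β hβA).le)


open Cardinal in
theorem bounded_of_countable (A : Set Ordinal.{u}) (hA : ∀ α ∈ A, α < (aleph 1).ord)
    (hc : Countable ↥A) : ∃ b, b < (aleph 1).ord ∧ ∀ α ∈ A, α < b := by
  rcases A.eq_empty_or_nonempty with rfl | hne
  · exact ⟨0, Cardinal.lt_ord.mpr (by simpa using Cardinal.aleph_pos 1), by simp⟩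
  · obtain ⟨f, hf⟩ := Set.Countable.exists_eq_range (Set.countable_coe_iff.mp hc) hne
    refine ⟨⨆ n : ULift.{u} ℕ, (f n.down + 1), ?_, ?_⟩
    · refine Ordinal.iSup_lt_of_lt_cof ?_ ?_
      · rw [Cardinal.isRegular_aleph_one.cof_eq]
        have : #(ULift.{u} ℕ) = ℵ₀ := by simp
        rw [this]; exact Cardinal.aleph0_lt_aleph_one
      · intro i
        have : f i.down ∈ A := hf ▸ Set.mem_range_self i.down
        rw [Ordinal.add_one_eq_succ]
        exact (Cardinal.isSuccLimit_ord (Cardinal.aleph0_le_aleph 1)).succ_lt (hA _ this)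
    · intro α hα
      rw [hf] at hα
      obtain ⟨n, rfl⟩ := hα
      calc f n < f n + 1 := by rw [Ordinal.add_one_eq_succ]; exact Order.lt_succ _
      _ ≤ _ := Ordinal.le_iSup (fun n : ULift.{u} ℕ => f n.down + 1) (ULift.up n)

theorem stmt12 {X Y : Type u} (E : X → X → Prop) (F : Y → Y → Prop)
    (hE : Equivalence E) (hF : Equivalence F)
    (hE1 : nEq E 1 = Cardinal.aleph0)
    (hE2 : ∀ α : Ordinal.{u}, α < (Cardinal.aleph 1).ord → Order.IsSuccLimit α →
        nEq E (Cardinal.aleph α) = Cardinal.aleph0)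
    (hE3 : ∀ κ : Cardinal.{u}, κ ≠ 1 →
        (¬ ∃ α : Ordinal.{u}, α < (Cardinal.aleph 1).ord ∧ Order.IsSuccLimit α ∧ κ = Cardinal.aleph α) →
        nEq E κ = 0)
    (hF1 : nEq F 1 = Cardinal.aleph0)
    (hF2 : ∀ α : Ordinal.{u}, α < (Cardinal.aleph 1).ord → Order.IsSuccLimit α →
        nEq F (Cardinal.aleph (α + 1)) = Cardinal.aleph0)
    (hF3 : ∀ κ : Cardinal.{u}, κ ≠ 1 →
        (¬ ∃ α : Ordinal.{u}, α < (Cardinal.aleph 1).ord ∧ Order.IsSuccLimit α ∧ κ = Cardinal.aleph (α + 1)) →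
        nEq F κ = 0) :
    ¬ ∃ φ : X → Y, (∀ x x' : X, E x x' ↔ F (φ x) (φ x')) ∧
        ∀ y y' : Y, y ∈ Set.range φ → F y y' → y' ∈ Set.range φ := by
  rintro ⟨φ, hred, hinv⟩
  -- the image of an E-class is a full F-class
  have himg : ∀ x0 : X, φ '' {y | E x0 y} = {y' | F (φ x0) y'} := by
    intro x0
    ext y'
    constructor
    · rintro ⟨x', hx', rfl⟩
      exact (hred x0 x').mp hx'
    · intro hy'
      obtain ⟨x'', hx''⟩ := hinv (φ x0) y' ⟨x0, rfl⟩ hy'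
      refine ⟨x'', (hred x0 x'').mpr ?_, hx''⟩
      rw [hx'']; exact hy'
  -- X is nonempty
  have hXne : Nonempty X := by
    have h1 : nEq E 1 ≠ 0 := by rw [hE1]; exact Cardinal.aleph0_ne_zero
    rw [nEq, Cardinal.mk_ne_zero_iff] at h1
    obtain ⟨⟨C, ⟨x, rfl⟩, -⟩⟩ := h1
    exact ⟨x⟩
  -- choose a representative of an E-class of size aleph α for each countable limit α
  have hxex : ∀ α : Ordinal.{u}, ∃ x : X,
      α < (Cardinal.aleph 1).ord → Order.IsSuccLimit α → Cardinal.mk {y | E x y} = Cardinal.aleph α := by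
    intro α
    by_cases hα : α < (Cardinal.aleph 1).ord ∧ Order.IsSuccLimit α
    · have h2 : nEq E (Cardinal.aleph α) ≠ 0 := by
        rw [hE2 α hα.1 hα.2]; exact Cardinal.aleph0_ne_zero
      rw [nEq, Cardinal.mk_ne_zero_iff] at h2
      obtain ⟨⟨C, ⟨x, rfl⟩, hC⟩⟩ := h2
      exact ⟨x, fun _ _ => hC⟩
    · exact ⟨Classical.choice hXne, fun h1 h2 => absurd ⟨h1, h2⟩ hα⟩
  choose xf hxf using hxex
  set Df : Ordinal.{u} → Set Y := fun α => {y' | F (φ (xf α)) y'} with hDf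
  have hDmem : ∀ α, Df α ∈ EqClasses F := fun α => ⟨φ (xf α), rfl⟩
  -- cardinality bound
  have hcard : ∀ α : Ordinal.{u}, α < (Cardinal.aleph 1).ord → Order.IsSuccLimit α →
      Cardinal.mk (Df α) ≤ Cardinal.aleph α := by
    intro α h1 h2
    calc Cardinal.mk (Df α) = Cardinal.mk (φ '' {y | E (xf α) y}) := by rw [himg (xf α)]
    _ ≤ Cardinal.mk {y | E (xf α) y} := Cardinal.mk_image_le
    _ = Cardinal.aleph α := hxf α h1 h2
  -- injectivity at class level
  have hinj : ∀ α α' : Ordinal.{u}, α < (Cardinal.aleph 1).ord → Order.IsSuccLimit α →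
      α' < (Cardinal.aleph 1).ord → Order.IsSuccLimit α' → Df α = Df α' → α = α' := by
    intro α α' h1 h2 h1' h2' hD
    have h3 : F (φ (xf α)) (φ (xf α')) := by
      have hm : φ (xf α') ∈ Df α' := hF.refl _
      rw [← hD] at hm; exact hm
    have hEx : E (xf α) (xf α') := (hred _ _).mpr h3
    have hset : {y | E (xf α) y} = {y | E (xf α') y} := by
      ext y
      exact ⟨fun hy => hE.trans (hE.symm hEx) hy, fun hy => hE.trans hEx hy⟩
    have h4 : Cardinal.aleph α = Cardinal.aleph α' := by
      rw [← hxf α h1 h2, ← hxf α' h1' h2', hset]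
    exact le_antisymm (Cardinal.aleph_le_aleph.mp h4.le) (Cardinal.aleph_le_aleph.mp h4.ge)
  -- every F-class of size ≠ 1 has size aleph (β+1) for some countable limit β
  have hβex : ∀ α : Ordinal.{u}, ∃ β : Ordinal.{u},
      α < (Cardinal.aleph 1).ord → Order.IsSuccLimit α → Cardinal.mk (Df α) ≠ 1 →
      β < (Cardinal.aleph 1).ord ∧ Order.IsSuccLimit β ∧
        Cardinal.mk (Df α) = Cardinal.aleph (β + 1) := by
    intro α
    by_cases hcase : ∃ β : Ordinal.{u}, β < (Cardinal.aleph 1).ord ∧ Order.IsSuccLimit β ∧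
        Cardinal.mk (Df α) = Cardinal.aleph (β + 1)
    · obtain ⟨β, hβ⟩ := hcase
      exact ⟨β, fun _ _ _ => hβ⟩
    · refine ⟨0, fun h1 h2 hne => ?_⟩
      exfalso
      have h0 : nEq F (Cardinal.mk (Df α)) = 0 := hF3 _ hne hcase
      have hne0 : Nonempty {C : Set Y // C ∈ EqClasses F ∧
          Cardinal.mk C = Cardinal.mk (Df α)} := ⟨⟨Df α, hDmem α, rfl⟩⟩
      rw [nEq] at h0
      exact (Cardinal.mk_ne_zero_iff.mpr hne0) h0
  choose βf hβf using hβex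
  -- the set of α whose target class is a singleton is countable, hence bounded
  have hγex : ∃ γ₀, γ₀ < (Cardinal.aleph 1).ord ∧ ∀ α ∈
      {α : Ordinal.{u} | α < (Cardinal.aleph 1).ord ∧ Order.IsSuccLimit α ∧ Cardinal.mk (Df α) = 1},
      α < γ₀ := by
    refine bounded_of_countable _ (fun α hα => hα.1) ?_
    have hcnt : Countable {C : Set Y // C ∈ EqClasses F ∧ Cardinal.mk C = 1} := by
      refine Cardinal.mk_le_aleph0_iff.mp ?_
      rw [← nEq]; exact le_of_eq hF1
    refine Function.Injective.countable
      (f := fun a : {α : Ordinal.{u} // α ∈ {α : Ordinal.{u} | α < (Cardinal.aleph 1).ord ∧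
          Order.IsSuccLimit α ∧ Cardinal.mk (Df α) = 1}} =>
        (⟨Df a.1, hDmem a.1, a.2.2.2⟩ : {C : Set Y // C ∈ EqClasses F ∧ Cardinal.mk C = 1})) ?_
    rintro ⟨α, hα⟩ ⟨α', hα'⟩ h
    have : Df α = Df α' := congrArg Subtype.val h
    exact Subtype.ext (hinj α α' hα.1 hα.2.1 hα'.1 hα'.2.1 this)
  obtain ⟨γ₀, hγ₀lt, hγ₀⟩ := hγex
  -- fibers of βf are countable, hence bounded
  have hbex : ∀ β : Ordinal.{u}, ∃ b, b < (Cardinal.aleph 1).ord ∧ ∀ α ∈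
      {α : Ordinal.{u} | α < (Cardinal.aleph 1).ord ∧ Order.IsSuccLimit α ∧
        Cardinal.mk (Df α) ≠ 1 ∧ βf α = β}, α < b := by
    intro β
    refine bounded_of_countable _ (fun α hα => hα.1) ?_
    by_cases hβgood : β < (Cardinal.aleph 1).ord ∧ Order.IsSuccLimit β
    · have hcnt : Countable {C : Set Y // C ∈ EqClasses F ∧
          Cardinal.mk C = Cardinal.aleph (β + 1)} := by
        refine Cardinal.mk_le_aleph0_iff.mp ?_
        rw [← nEq]; exact le_of_eq (hF2 β hβgood.1 hβgood.2)
      refine Function.Injective.countable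
        (f := fun a : {α : Ordinal.{u} // α ∈ {α : Ordinal.{u} | α < (Cardinal.aleph 1).ord ∧
            Order.IsSuccLimit α ∧ Cardinal.mk (Df α) ≠ 1 ∧ βf α = β}} =>
          (⟨Df a.1, hDmem a.1, by
            have := (hβf a.1 a.2.1 a.2.2.1 a.2.2.2.1).2.2
            rw [a.2.2.2.2] at this
            exact this⟩ :
            {C : Set Y // C ∈ EqClasses F ∧ Cardinal.mk C = Cardinal.aleph (β + 1)})) ?_
      rintro ⟨α, hα⟩ ⟨α', hα'⟩ h
      have : Df α = Df α' := congrArg Subtype.val h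
      exact Subtype.ext (hinj α α' hα.1 hα.2.1 hα'.1 hα'.2.1 this)
    · have hempty : {α : Ordinal.{u} | α < (Cardinal.aleph 1).ord ∧ Order.IsSuccLimit α ∧
          Cardinal.mk (Df α) ≠ 1 ∧ βf α = β} = ∅ := by
        ext α
        simp only [Set.mem_setOf_eq, Set.mem_empty_iff_false, iff_false]
        rintro ⟨h1, h2, h3, h4⟩
        have := hβf α h1 h2 h3
        exact hβgood ⟨h4 ▸ this.1, h4 ▸ this.2.1⟩
      rw [hempty]
      exact Set.countable_coe_iff.mpr Set.countable_empty
  choose bf hbf using hbex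
  -- apply the pressing-down contradiction
  refine press_core γ₀ bf hγ₀lt (fun β => (hbf β).1) ?_
  intro α h1 h2
  by_cases hone : Cardinal.mk (Df α) = 1
  · exact Or.inl (hγ₀ α ⟨h1, h2, hone⟩)
  · obtain ⟨hblt, hblim, hbeq⟩ := hβf α h1 h2 hone
    refine Or.inr ⟨βf α, ?_, (hbf (βf α)).2 α ⟨h1, h2, hone, rfl⟩⟩
    have hle : Cardinal.aleph (βf α + 1) ≤ Cardinal.aleph α := by
      rw [← hbeq]; exact hcard α h1 h2
    have : βf α + 1 ≤ α := Cardinal.aleph_le_aleph.mp hle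
    rw [Ordinal.add_one_eq_succ] at this
    exact Order.succ_le_iff.mp this
end

section
/- For the equivalence relations E and F of the previous construction (E with ℵ₀ classes of size 1 and ℵ₀ classes of size ℵ_α for each countable limit α; F with ℵ₀ classes of size 1 and ℵ₀ classes of size ℵ_{α+1} for each countable limit α), for every cardinal κ we have n_{≤κ}(E) = n_{≤κ}(F) and n_{≥κ}(E) = n_{≥κ}(F). -/
universe u

open Cardinal Ordinal

namespace Stmt13Aux

variable {X : Type u}

lemma nEq_ne_zero_of_mem (E : X → X → Prop) {C : Set X} (hC : C ∈ EqClasses E) :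
    nEq E (#C) ≠ 0 := by
  rw [nEq, Cardinal.mk_ne_zero_iff]
  exact ⟨⟨C, hC, rfl⟩⟩

lemma exCl (E : X → X → Prop) {μ : Cardinal.{u}} (h : nEq E μ ≠ 0) :
    ∃ C : Set X, C ∈ EqClasses E ∧ #C = μ := by
  rw [nEq, Cardinal.mk_ne_zero_iff] at h
  obtain ⟨⟨C, h1, h2⟩⟩ := h
  exact ⟨C, h1, h2⟩

lemma le_of_imp (E : X → X → Prop) (P : Set X → Prop) (μ : Cardinal.{u})
    (h : ∀ C : Set X, #C = μ → P C) :
    nEq E μ ≤ #{C : Set X // C ∈ EqClasses E ∧ P C} := by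
  apply Cardinal.mk_le_of_injective
    (f := fun s : {C : Set X // C ∈ EqClasses E ∧ #C = μ} => ⟨s.1, s.2.1, h s.1 s.2.2⟩)
  intro a b hab
  cases a; cases b
  simpa using hab

lemma eq_zero_of_imp (E : X → X → Prop) (P : Set X → Prop)
    (h : ∀ C : Set X, C ∈ EqClasses E → ¬ P C) :
    #{C : Set X // C ∈ EqClasses E ∧ P C} = 0 := by
  rw [Cardinal.mk_eq_zero_iff]
  exact ⟨fun s => h s.1 s.2.1 s.2.2⟩

lemma classify (E : X → X → Prop) (G : Ordinal.{u} → Cardinal.{u})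
    (h3 : ∀ κ : Cardinal.{u}, κ ≠ 1 →
      (¬ ∃ α : Ordinal.{u}, α < (Cardinal.aleph 1).ord ∧ Order.IsSuccLimit α ∧ κ = G α) →
      nEq E κ = 0) :
    ∀ C : Set X, C ∈ EqClasses E →
      Cardinal.mk C = 1 ∨ ∃ α, α < (Cardinal.aleph 1).ord ∧ Order.IsSuccLimit α ∧ #C = G α := by
  intro C hC
  by_contra hcon
  refine nEq_ne_zero_of_mem E hC (h3 _ (fun h => hcon (Or.inl h)) ?_)
  rintro ⟨α, h1, h2, h4⟩
  exact hcon (Or.inr ⟨α, h1, h2, h4⟩)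

lemma count (E : X → X → Prop) (G : Ordinal.{u} → Cardinal.{u})
    (h1 : nEq E 1 = ℵ₀)
    (h2 : ∀ α : Ordinal.{u}, α < (Cardinal.aleph 1).ord → Order.IsSuccLimit α → nEq E (G α) = ℵ₀)
    (h3 : ∀ κ : Cardinal.{u}, κ ≠ 1 →
      (¬ ∃ α : Ordinal.{u}, α < (Cardinal.aleph 1).ord ∧ Order.IsSuccLimit α ∧ κ = G α) →
      nEq E κ = 0) :
    ∀ μ : Cardinal.{u}, nEq E μ ≤ ℵ₀ := by
  intro μ
  by_cases hμ : μ = 1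
  · rw [hμ, h1]
  by_cases hg : ∃ α : Ordinal.{u}, α < (Cardinal.aleph 1).ord ∧ Order.IsSuccLimit α ∧ μ = G α
  · obtain ⟨α, ha, hb, hc⟩ := hg
    rw [hc, h2 α ha hb]
  · rw [h3 μ hμ hg]
    exact zero_le

lemma ub (E : X → X → Prop) (hcount : ∀ μ : Cardinal.{u}, nEq E μ ≤ ℵ₀) (P : Set X → Prop)
    (δ : Ordinal.{u})
    (hsz : ∀ C : Set X, C ∈ EqClasses E → P C → #C = 1 ∨ ∃ α, α < δ ∧ #C = ℵ_ α) :
    #{C : Set X // C ∈ EqClasses E ∧ P C} ≤ (δ.card + 1) * ℵ₀ := by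
  set S := {C : Set X // C ∈ EqClasses E ∧ P C} with hS
  let v : Option δ.ToType → Cardinal.{u} := fun i =>
    i.elim 1 fun t => ℵ_ (((Ordinal.ToType.mk (o := δ)).symm t : Set.Iio δ) : Ordinal)
  have key : ∀ s : S, ∃ i : Option δ.ToType, #s.1 = v i := by
    intro s
    rcases hsz s.1 s.2.1 s.2.2 with h1 | ⟨α, hα, h2⟩
    · exact ⟨none, h1⟩
    · refine ⟨some (Ordinal.ToType.mk (o := δ) ⟨α, hα⟩), ?_⟩
      show #s.1 = ℵ_ (((Ordinal.ToType.mk (o := δ)).symm (Ordinal.ToType.mk (o := δ) ⟨α, hα⟩) :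
        Set.Iio δ) : Ordinal)
      rw [OrderIso.symm_apply_apply]
      exact h2
  choose f hf using key
  have hfib : ∀ i, #{s : S // f s = i} ≤ ℵ₀ := by
    intro i
    refine le_trans ?_ (hcount (v i))
    have : #{s : S // f s = i} ≤ #{C : Set X // C ∈ EqClasses E ∧ #C = v i} := by
      apply Cardinal.mk_le_of_injective
        (f := fun s : {s : S // f s = i} => ⟨s.1.1, s.1.2.1, by rw [hf s.1, s.2]⟩)
      intro a b hab
      obtain ⟨⟨a1, pa⟩, qa⟩ := a
      obtain ⟨⟨b1, pb⟩, qb⟩ := b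
      have : a1 = b1 := by simpa using hab
      subst this
      rfl
    exact this
  calc #S = #(Σ i : Option δ.ToType, {s : S // f s = i}) :=
        (Cardinal.mk_congr (Equiv.sigmaFiberEquiv f)).symm
    _ = Cardinal.sum (fun i : Option δ.ToType => #{s : S // f s = i}) := Cardinal.mk_sigma _
    _ ≤ Cardinal.sum (fun _ : Option δ.ToType => ℵ₀) := Cardinal.sum_le_sum _ _ hfib
    _ = #(Option δ.ToType) * ℵ₀ := Cardinal.sum_const' _ _
    _ = (δ.card + 1) * ℵ₀ := by rw [Cardinal.mk_option, Cardinal.mk_toType]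

lemma lb (E : X → X → Prop) (P : Set X → Prop) (g : Ordinal.{u} → Cardinal.{u})
    (hg : ∀ ⦃α β : Ordinal.{u}⦄, Order.IsSuccLimit α → Order.IsSuccLimit β → g α = g β → α = β)
    (h : ∀ α : Ordinal.{u}, α < (Cardinal.aleph 1).ord → Order.IsSuccLimit α →
      ∃ C : Set X, C ∈ EqClasses E ∧ P C ∧ #C = g α) :
    Cardinal.aleph 1 ≤ #{C : Set X // C ∈ EqClasses E ∧ P C} := by
  set o := (Cardinal.aleph 1).ord with ho
  choose Cf hmem hP hcard using h
  set fo : Ordinal.{u} → Ordinal.{u} := fun β => Ordinal.omega0 * (β + 1) with hfo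
  have hlim : ∀ β : Ordinal.{u}, Order.IsSuccLimit (fo β) := by
    intro β
    rw [hfo]
    show Order.IsSuccLimit (Ordinal.omega0 * (β + 1))
    rw [Ordinal.add_one_eq_succ, Ordinal.mul_succ]
    exact Ordinal.isSuccLimit_add _ Ordinal.isSuccLimit_omega0
  have hltfo : ∀ β : Ordinal.{u}, β < o → fo β < o := by
    intro β hβ
    rw [Cardinal.lt_ord] at hβ ⊢
    rw [hfo]
    show ((Ordinal.omega0 * (β + 1)).card : Cardinal) < Cardinal.aleph 1
    rw [Ordinal.card_mul, Ordinal.card_add, Ordinal.card_omega0, Ordinal.card_one]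
    refine Cardinal.mul_lt_of_lt (Cardinal.aleph0_le_aleph 1) Cardinal.aleph0_lt_aleph_one ?_
    exact Cardinal.add_lt_of_lt (Cardinal.aleph0_le_aleph 1) hβ
      (lt_trans Cardinal.one_lt_aleph0 Cardinal.aleph0_lt_aleph_one)
  have hinjfo : Function.Injective fo := by
    have h1 : StrictMono (fun x : Ordinal.{u} => Ordinal.omega0 * x) := fun a b hab =>
      (Ordinal.isNormal_mul_right Ordinal.omega0_pos).strictMono hab
    intro a b hab
    have := h1.injective hab
    simpa using this
  let pick : o.ToType → {C : Set X // C ∈ EqClasses E ∧ P C} := fun i =>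
    let β := ((Ordinal.ToType.mk (o := o)).symm i : Set.Iio o)
    ⟨Cf (fo β.1) (hltfo β.1 β.2) (hlim β.1),
      hmem (fo β.1) (hltfo β.1 β.2) (hlim β.1), hP (fo β.1) (hltfo β.1 β.2) (hlim β.1)⟩
  have hpinj : Function.Injective pick := by
    intro i j hij
    have hset := congrArg Subtype.val hij
    have hcd := congrArg (fun s : Set X => #s) hset
    set βi := ((Ordinal.ToType.mk (o := o)).symm i : Set.Iio o)
    set βj := ((Ordinal.ToType.mk (o := o)).symm j : Set.Iio o)
    rw [hcard (fo βi.1) (hltfo βi.1 βi.2) (hlim βi.1),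
      hcard (fo βj.1) (hltfo βj.1 βj.2) (hlim βj.1)] at hcd
    have hfo' : fo βi.1 = fo βj.1 := hg (hlim βi.1) (hlim βj.1) hcd
    have hβ : βi = βj := Subtype.ext (hinjfo hfo')
    exact (Ordinal.ToType.mk (o := o)).symm.injective hβ
  calc Cardinal.aleph 1 = o.card := (Cardinal.card_ord _).symm
    _ = #o.ToType := (Cardinal.mk_toType o).symm
    _ ≤ _ := Cardinal.mk_le_of_injective hpinj

lemma exists_gamma {κ : Cardinal.{u}} (hκ : ¬ Cardinal.aleph (Cardinal.aleph 1).ord ≤ κ) :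
    ∃ γ : Ordinal.{u}, γ < (Cardinal.aleph 1).ord ∧ κ < Cardinal.aleph γ := by
  by_contra hcon
  push_neg at hcon
  apply hκ
  rw [Cardinal.aleph_limit (Cardinal.isSuccLimit_ord (Cardinal.aleph0_le_aleph 1))]
  haveI : Nonempty (Set.Iio (Cardinal.aleph 1).ord) :=
    ⟨⟨0, Cardinal.lt_ord.2 (by rw [Ordinal.card_zero]; exact Cardinal.aleph_pos 1)⟩⟩
  exact ciSup_le' fun a => hcon a.1 a.2

lemma aleph_inj {α β : Ordinal.{u}} (h : Cardinal.aleph α = Cardinal.aleph β) : α = β :=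
  le_antisymm (Cardinal.aleph_le_aleph.1 h.le) (Cardinal.aleph_le_aleph.1 h.ge)

end Stmt13Aux
theorem stmt13 {X Y : Type u} (E : X → X → Prop) (F : Y → Y → Prop)
    (hE : Equivalence E) (hF : Equivalence F)
    (hE1 : nEq E 1 = Cardinal.aleph0)
    (hE2 : ∀ α : Ordinal.{u}, α < (Cardinal.aleph 1).ord → Order.IsSuccLimit α →
        nEq E (Cardinal.aleph α) = Cardinal.aleph0)
    (hE3 : ∀ κ : Cardinal.{u}, κ ≠ 1 →
        (¬ ∃ α : Ordinal.{u}, α < (Cardinal.aleph 1).ord ∧ Order.IsSuccLimit α ∧ κ = Cardinal.aleph α) →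
        nEq E κ = 0)
    (hF1 : nEq F 1 = Cardinal.aleph0)
    (hF2 : ∀ α : Ordinal.{u}, α < (Cardinal.aleph 1).ord → Order.IsSuccLimit α →
        nEq F (Cardinal.aleph (α + 1)) = Cardinal.aleph0)
    (hF3 : ∀ κ : Cardinal.{u}, κ ≠ 1 →
        (¬ ∃ α : Ordinal.{u}, α < (Cardinal.aleph 1).ord ∧ Order.IsSuccLimit α ∧ κ = Cardinal.aleph (α + 1)) →
        nEq F κ = 0) :
    ∀ κ : Cardinal.{u}, nLe E κ = nLe F κ ∧ nGe E κ = nGe F κ := by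
  intro κ
  classical
  have ho1 : Order.IsSuccLimit (Cardinal.aleph 1).ord :=
    Cardinal.isSuccLimit_ord (Cardinal.aleph0_le_aleph 1)
  have clE := Stmt13Aux.classify E (fun α => Cardinal.aleph α) hE3
  have clF := Stmt13Aux.classify F (fun α => Cardinal.aleph (α + 1)) hF3
  have cntE := Stmt13Aux.count E (fun α => Cardinal.aleph α) hE1 hE2 hE3
  have cntF := Stmt13Aux.count F (fun α => Cardinal.aleph (α + 1)) hF1 hF2 hF3
  have hsucclt : ∀ α : Ordinal.{u}, α < (Cardinal.aleph 1).ord →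
      α + 1 < (Cardinal.aleph 1).ord := by
    intro α hα
    rw [Ordinal.add_one_eq_succ]
    exact ho1.succ_lt hα
  -- total upper bounds
  have totE : ∀ P : Set X → Prop,
      #{C : Set X // C ∈ EqClasses E ∧ P C} ≤ Cardinal.aleph 1 := by
    intro P
    have h := Stmt13Aux.ub E cntE P (Cardinal.aleph 1).ord (fun C hC _ => by
      rcases clE C hC with h1 | ⟨α, ha, _, hc⟩
      · exact Or.inl h1
      · exact Or.inr ⟨α, ha, hc⟩)
    rwa [Cardinal.card_ord, Cardinal.add_one_eq (Cardinal.aleph0_le_aleph 1),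
      Cardinal.mul_aleph0_eq (Cardinal.aleph0_le_aleph 1)] at h
  have totF : ∀ P : Set Y → Prop,
      #{C : Set Y // C ∈ EqClasses F ∧ P C} ≤ Cardinal.aleph 1 := by
    intro P
    have h := Stmt13Aux.ub F cntF P (Cardinal.aleph 1).ord (fun C hC _ => by
      rcases clF C hC with h1 | ⟨α, ha, _, hc⟩
      · exact Or.inl h1
      · exact Or.inr ⟨α + 1, hsucclt α ha, hc⟩)
    rwa [Cardinal.card_ord, Cardinal.add_one_eq (Cardinal.aleph0_le_aleph 1),
      Cardinal.mul_aleph0_eq (Cardinal.aleph0_le_aleph 1)] at h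
  constructor
  · -- nLe
    by_cases h0 : κ = 0
    · subst h0
      have zE : nLe E 0 = 0 := Stmt13Aux.eq_zero_of_imp E (fun C => #C ≤ 0) (by
        intro C hC hle
        rcases clE C hC with h1 | ⟨α, _, _, hc⟩
        · rw [h1] at hle
          exact absurd (le_zero_iff.1 hle) one_ne_zero
        · rw [hc] at hle
          exact absurd (le_zero_iff.1 hle) (Cardinal.aleph_pos α).ne')
      have zF : nLe F 0 = 0 := Stmt13Aux.eq_zero_of_imp F (fun C => #C ≤ 0) (by
        intro C hC hle
        rcases clF C hC with h1 | ⟨α, _, _, hc⟩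
        · rw [h1] at hle
          exact absurd (le_zero_iff.1 hle) one_ne_zero
        · rw [hc] at hle
          exact absurd (le_zero_iff.1 hle) (Cardinal.aleph_pos (α + 1)).ne')
      rw [zE, zF]
    by_cases hbig : Cardinal.aleph (Cardinal.aleph 1).ord ≤ κ
    · -- both ℵ₁
      have lowE : Cardinal.aleph 1 ≤ nLe E κ :=
        Stmt13Aux.lb E (fun C => #C ≤ κ) (fun α => Cardinal.aleph α)
          (fun α β _ _ h => Stmt13Aux.aleph_inj h)
          (fun α hα hlim => by
            obtain ⟨C, hm, hc⟩ := Stmt13Aux.exCl E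
              (by rw [hE2 α hα hlim]; exact Cardinal.aleph0_ne_zero)
            exact ⟨C, hm, by
              show #C ≤ κ
              rw [hc]; exact (Cardinal.aleph_lt_aleph.2 hα).le.trans hbig, hc⟩)
      have lowF : Cardinal.aleph 1 ≤ nLe F κ :=
        Stmt13Aux.lb F (fun C => #C ≤ κ) (fun α => Cardinal.aleph (α + 1))
          (fun α β _ _ h => by
            have := Stmt13Aux.aleph_inj h
            rwa [Ordinal.add_one_eq_succ, Ordinal.add_one_eq_succ,
              Order.succ_eq_succ_iff] at this)
          (fun α hα hlim => by
            obtain ⟨C, hm, hc⟩ := Stmt13Aux.exCl F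
              (by rw [hF2 α hα hlim]; exact Cardinal.aleph0_ne_zero)
            exact ⟨C, hm, by
              show #C ≤ κ
              rw [hc]; exact (Cardinal.aleph_lt_aleph.2 (hsucclt α hα)).le.trans hbig, hc⟩)
      have eqE : nLe E κ = Cardinal.aleph 1 := le_antisymm (totE _) lowE
      have eqF : nLe F κ = Cardinal.aleph 1 := le_antisymm (totF _) lowF
      rw [eqE, eqF]
    · -- both ℵ₀
      obtain ⟨γ, hγ, hκγ⟩ := Stmt13Aux.exists_gamma hbig
      have hγc : γ.card ≤ Cardinal.aleph0 := by
        have := Cardinal.lt_ord.1 hγ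
        rwa [← Cardinal.succ_aleph0, Order.lt_succ_iff] at this
      have hbound : (γ.card + 1) * Cardinal.aleph0 ≤ Cardinal.aleph0 := by
        calc (γ.card + 1) * Cardinal.aleph0
            ≤ (Cardinal.aleph0 + 1) * Cardinal.aleph0 :=
              mul_le_mul_left (add_le_add_left hγc 1) _
          _ = Cardinal.aleph0 * Cardinal.aleph0 := by rw [Cardinal.add_one_eq le_rfl]
          _ = Cardinal.aleph0 := Cardinal.aleph0_mul_aleph0
      have lowE : Cardinal.aleph0 ≤ nLe E κ := by
        rw [← hE1]
        exact Stmt13Aux.le_of_imp E (fun C => #C ≤ κ) 1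
          (fun C hc => hc.le.trans (Cardinal.one_le_iff_ne_zero.2 h0))
      have lowF : Cardinal.aleph0 ≤ nLe F κ := by
        rw [← hF1]
        exact Stmt13Aux.le_of_imp F (fun C => #C ≤ κ) 1
          (fun C hc => hc.le.trans (Cardinal.one_le_iff_ne_zero.2 h0))
      have upE : nLe E κ ≤ Cardinal.aleph0 := by
        refine le_trans (Stmt13Aux.ub E cntE (fun C => #C ≤ κ) γ ?_) hbound
        intro C hC hle
        rcases clE C hC with h1 | ⟨α, _, _, hc⟩
        · exact Or.inl h1
        · refine Or.inr ⟨α, ?_, hc⟩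
          exact Cardinal.aleph_lt_aleph.1 ((hc ▸ hle).trans_lt hκγ)
      have upF : nLe F κ ≤ Cardinal.aleph0 := by
        refine le_trans (Stmt13Aux.ub F cntF (fun C => #C ≤ κ) γ ?_) hbound
        intro C hC hle
        rcases clF C hC with h1 | ⟨α, _, _, hc⟩
        · exact Or.inl h1
        · refine Or.inr ⟨α + 1, ?_, hc⟩
          exact Cardinal.aleph_lt_aleph.1 ((hc ▸ hle).trans_lt hκγ)
      rw [le_antisymm upE lowE, le_antisymm upF lowF]
  · -- nGe
    by_cases hbig : Cardinal.aleph (Cardinal.aleph 1).ord ≤ κ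
    · -- both 0
      have zE : nGe E κ = 0 := Stmt13Aux.eq_zero_of_imp E (fun C => κ ≤ #C) (by
        intro C hC hle
        rcases clE C hC with h1 | ⟨α, hα, _, hc⟩
        · rw [h1] at hle
          exact Cardinal.one_lt_aleph0.not_ge
            (((Cardinal.aleph0_le_aleph _).trans hbig).trans hle)
        · rw [hc] at hle
          exact (Cardinal.aleph_lt_aleph.2 hα).not_ge (hbig.trans hle))
      have zF : nGe F κ = 0 := Stmt13Aux.eq_zero_of_imp F (fun C => κ ≤ #C) (by
        intro C hC hle
        rcases clF C hC with h1 | ⟨α, hα, _, hc⟩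
        · rw [h1] at hle
          exact Cardinal.one_lt_aleph0.not_ge
            (((Cardinal.aleph0_le_aleph _).trans hbig).trans hle)
        · rw [hc] at hle
          exact (Cardinal.aleph_lt_aleph.2 (hsucclt α hα)).not_ge (hbig.trans hle))
      rw [zE, zF]
    · -- both ℵ₁
      obtain ⟨γ, hγ, hκγ⟩ := Stmt13Aux.exists_gamma hbig
      have hsum : ∀ α : Ordinal.{u}, α < (Cardinal.aleph 1).ord →
          γ + α < (Cardinal.aleph 1).ord := by
        intro α hα
        rw [Cardinal.lt_ord] at hγ hα ⊢
        rw [Ordinal.card_add]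
        exact Cardinal.add_lt_of_lt (Cardinal.aleph0_le_aleph 1) hγ hα
      have lowE : Cardinal.aleph 1 ≤ nGe E κ :=
        Stmt13Aux.lb E (fun C => κ ≤ #C) (fun α => Cardinal.aleph (γ + α))
          (fun α β _ _ h => (add_left_cancel_iff (a := γ)).1 (Stmt13Aux.aleph_inj h))
          (fun α hα hlim => by
            obtain ⟨C, hm, hc⟩ := Stmt13Aux.exCl E
              (by rw [hE2 (γ + α) (hsum α hα) (Ordinal.isSuccLimit_add γ hlim)]
                  exact Cardinal.aleph0_ne_zero)
            refine ⟨C, hm, ?_, hc⟩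
            show κ ≤ #C
            rw [hc]
            exact hκγ.le.trans (Cardinal.aleph_le_aleph.2 (le_self_add)))
      have lowF : Cardinal.aleph 1 ≤ nGe F κ :=
        Stmt13Aux.lb F (fun C => κ ≤ #C) (fun α => Cardinal.aleph (γ + α + 1))
          (fun α β _ _ h => by
            have := Stmt13Aux.aleph_inj h
            rw [Ordinal.add_one_eq_succ, Ordinal.add_one_eq_succ,
              Order.succ_eq_succ_iff] at this
            exact (add_left_cancel_iff (a := γ)).1 this)
          (fun α hα hlim => by
            obtain ⟨C, hm, hc⟩ := Stmt13Aux.exCl F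
              (by rw [hF2 (γ + α) (hsum α hα) (Ordinal.isSuccLimit_add γ hlim)]
                  exact Cardinal.aleph0_ne_zero)
            refine ⟨C, hm, ?_, hc⟩
            show κ ≤ #C
            rw [hc]
            refine hκγ.le.trans (Cardinal.aleph_le_aleph.2 ?_)
            rw [add_assoc]
            exact le_self_add)
      have eqE : nGe E κ = Cardinal.aleph 1 := le_antisymm (totE _) lowE
      have eqF : nGe F κ = Cardinal.aleph 1 := le_antisymm (totF _) lowF
      rw [eqE, eqF]
end

section
/- Let E and F be equivalence relations on sets X and Y. If there exists an injective reduction from E to F whose range is F-invariant, and also an injective reduction from F to E whose range is E-invariant, then E and F are isomorphic: there is a bijection φ : X → Y with x E x' iff φ(x) F φ(x'). -/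
universe u

theorem stmt14 {X Y : Type u} (E : X → X → Prop) (F : Y → Y → Prop)
    (hE : Equivalence E) (hF : Equivalence F)
    (h1 : ∃ φ : X → Y, Function.Injective φ ∧ (∀ x x' : X, E x x' ↔ F (φ x) (φ x')) ∧
        ∀ y y' : Y, y ∈ Set.range φ → F y y' → y' ∈ Set.range φ)
    (h2 : ∃ ψ : Y → X, Function.Injective ψ ∧ (∀ y y' : Y, F y y' ↔ E (ψ y) (ψ y')) ∧
        ∀ x x' : X, x ∈ Set.range ψ → E x x' → x' ∈ Set.range ψ) :
    ∃ φ : X → Y, Function.Bijective φ ∧ ∀ x x' : X, E x x' ↔ F (φ x) (φ x') := by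
  classical
  obtain ⟨φ, φinj, φred, φrng⟩ := h1
  obtain ⟨ψ, ψinj, ψred, ψrng⟩ := h2
  rcases isEmpty_or_nonempty Y with hY | hY
  · haveI : IsEmpty X := ⟨fun x => hY.false (φ x)⟩
    exact ⟨φ, ⟨φinj, fun y => isEmptyElim y⟩, φred⟩
  set L : ℕ → Set X := fun n => (ψ ∘ φ)^[n] '' (Set.range ψ)ᶜ with hL
  set A : Set X := ⋃ n : ℕ, L n with hA
  have memL : ∀ n x, x ∈ L n ↔ ∃ z ∈ (Set.range ψ)ᶜ, (ψ ∘ φ)^[n] z = x := by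
    intro n x; simp [hL, Set.mem_image]
  have Lsucc : ∀ n x, x ∈ L n → ψ (φ x) ∈ L (n + 1) := by
    intro n x hx
    obtain ⟨z, hz, rfl⟩ := (memL n x).mp hx
    refine (memL (n + 1) _).mpr ⟨z, hz, ?_⟩
    rw [Function.iterate_succ_apply']
    rfl
  have Lsucc' : ∀ n x, x ∈ L (n + 1) → ∃ z ∈ L n, ψ (φ z) = x := by
    intro n x hx
    obtain ⟨z, hz, hze⟩ := (memL (n + 1) x).mp hx
    refine ⟨(ψ ∘ φ)^[n] z, (memL n _).mpr ⟨z, hz, rfl⟩, ?_⟩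
    rw [← hze, Function.iterate_succ_apply']
    rfl
  -- each level is E-invariant
  have Linv : ∀ n x x', x ∈ L n → E x x' → x' ∈ L n := by
    intro n
    induction n with
    | zero =>
      intro x x' hx hxx'
      obtain ⟨z, hz, rfl⟩ := (memL 0 x).mp hx
      simp only [Function.iterate_zero, id] at *
      refine (memL 0 x').mpr ⟨x', ?_, by simp⟩
      intro hx'
      exact hz (ψrng x' z hx' (hE.symm hxx'))
    | succ n ih =>
      intro x x' hx hxx'
      obtain ⟨z, hzn, rfl⟩ := Lsucc' n x hx
      have hxr : ψ (φ z) ∈ Set.range ψ := ⟨_, rfl⟩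
      obtain ⟨y', rfl⟩ := ψrng _ x' hxr hxx'
      have hF1 : F (φ z) y' := (ψred _ _).mpr hxx'
      obtain ⟨z', rfl⟩ := φrng _ y' ⟨_, rfl⟩ hF1
      exact Lsucc n z' (ih z z' hzn ((φred _ _).mpr hF1))
  have Ainv : ∀ x x', x ∈ A → E x x' → x' ∈ A := by
    intro x x' hx hxx'
    obtain ⟨n, hn⟩ := Set.mem_iUnion.mp hx
    exact Set.mem_iUnion.mpr ⟨n, Linv n x x' hn hxx'⟩
  have Amap : ∀ x, x ∈ A → ψ (φ x) ∈ A := by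
    intro x hx
    obtain ⟨n, hn⟩ := Set.mem_iUnion.mp hx
    exact Set.mem_iUnion.mpr ⟨n + 1, Lsucc n x hn⟩
  have hnAr : ∀ x, x ∉ A → x ∈ Set.range ψ := by
    intro x hx
    by_contra hr
    exact hx (Set.mem_iUnion.mpr ⟨0, (memL 0 x).mpr ⟨x, hr, by simp⟩⟩)
  have hinv : ∀ x, x ∉ A → ψ (Function.invFun ψ x) = x := fun x hx =>
    Function.invFun_eq (hnAr x hx)
  set h : X → Y := fun x => if x ∈ A then φ x else Function.invFun ψ x with hh
  have mixed : ∀ x x', x ∈ A → x' ∉ A → ¬ F (φ x) (Function.invFun ψ x') := by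
    intro x x' hx hx' hFc
    have hE1 : E (ψ (φ x)) (ψ (Function.invFun ψ x')) := (ψred _ _).mp hFc
    rw [hinv x' hx'] at hE1
    exact hx' (Ainv _ _ (Amap x hx) hE1)
  refine ⟨h, ⟨?_, ?_⟩, ?_⟩
  · intro x x' heq
    simp only [hh] at heq
    by_cases hx : x ∈ A <;> by_cases hx' : x' ∈ A
    · rw [if_pos hx, if_pos hx'] at heq; exact φinj heq
    · rw [if_pos hx, if_neg hx'] at heq
      exfalso
      have : ψ (φ x) = x' := by rw [heq]; exact hinv x' hx'
      exact hx' (this ▸ Amap x hx)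
    · rw [if_neg hx, if_pos hx'] at heq
      exfalso
      have : ψ (φ x') = x := by rw [← heq]; exact hinv x hx
      exact hx (this ▸ Amap x' hx')
    · rw [if_neg hx, if_neg hx'] at heq
      have := congrArg ψ heq
      rwa [hinv x hx, hinv x' hx'] at this
  · intro y
    by_cases hy : ψ y ∈ A
    · obtain ⟨n, hn⟩ := Set.mem_iUnion.mp hy
      cases n with
      | zero =>
        exfalso
        obtain ⟨z, hz, hze⟩ := (memL 0 _).mp hn
        simp only [Function.iterate_zero, id] at hze
        exact hz (hze ▸ ⟨y, rfl⟩)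
      | succ n =>
        obtain ⟨z, hzn, hze⟩ := Lsucc' n _ hn
        have hzA : z ∈ A := Set.mem_iUnion.mpr ⟨n, hzn⟩
        have hy' : φ z = y := ψinj hze
        exact ⟨z, by simp only [hh, if_pos hzA, hy']⟩
    · refine ⟨ψ y, ?_⟩
      simp only [hh, if_neg hy]
      exact Function.leftInverse_invFun ψinj y
  · intro x x'
    simp only [hh]
    by_cases hx : x ∈ A <;> by_cases hx' : x' ∈ A
    · rw [if_pos hx, if_pos hx']; exact φred x x'
    · rw [if_pos hx, if_neg hx']
      constructor
      · intro hEx; exact absurd (Ainv x x' hx hEx) hx'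
      · intro hFc; exact absurd hFc (mixed x x' hx hx')
    · rw [if_neg hx, if_pos hx']
      constructor
      · intro hEx; exact absurd (Ainv x' x hx' (hE.symm hEx)) hx
      · intro hFc; exact absurd (hF.symm hFc) (mixed x' x hx' hx)
    · rw [if_neg hx, if_neg hx']
      rw [ψred, hinv x hx, hinv x' hx']
end

section
/- There exist equivalence relations E and F (on countable sets) such that there is a surjective reduction from E to F and a surjective reduction from F to E, but E and F are not isomorphic. Explicitly, let E have exactly one class of size n for each even n ≥ 2, F have exactly one class of size n for each odd n ≥ 3, and both have ℵ₀ many classes of size 1 and no other classes. -/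
/-- A set with one class of size `n` for each even `n ≥ 2` (the `Sum.inr` part, where the
`n`-th class has size `2 * n + 2`), plus `ℵ₀` many classes of size 1 (the `Sum.inl` part). -/
def X15 : Type := ℕ ⊕ (Σ n : ℕ, Fin (2 * n + 2))

/-- A set with one class of size `n` for each odd `n ≥ 3` (the `Sum.inr` part, where the
`n`-th class has size `2 * n + 3`), plus `ℵ₀` many classes of size 1 (the `Sum.inl` part). -/
def Y15 : Type := ℕ ⊕ (Σ n : ℕ, Fin (2 * n + 3))

def E15 : X15 → X15 → Prop
  | Sum.inl a, Sum.inl b => a = b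
  | Sum.inr p, Sum.inr q => p.1 = q.1
  | _, _ => False

def F15 : Y15 → Y15 → Prop
  | Sum.inl a, Sum.inl b => a = b
  | Sum.inr p, Sum.inr q => p.1 = q.1
  | _, _ => False

def phi15 : X15 → Y15
  | Sum.inl a => Sum.inl (a + 1)
  | Sum.inr ⟨0, _⟩ => Sum.inl 0
  | Sum.inr ⟨n + 1, k⟩ => Sum.inr ⟨n, ⟨k.val % (2 * n + 3), Nat.mod_lt _ (by omega)⟩⟩

def psi15 : Y15 → X15
  | Sum.inl a => Sum.inl a
  | Sum.inr ⟨n, k⟩ => Sum.inr ⟨n, ⟨k.val % (2 * n + 2), Nat.mod_lt _ (by omega)⟩⟩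

theorem stmt15 :
    Equivalence E15 ∧ Equivalence F15 ∧
    (∃ φ : X15 → Y15, Function.Surjective φ ∧ ∀ x x' : X15, E15 x x' ↔ F15 (φ x) (φ x')) ∧
    (∃ ψ : Y15 → X15, Function.Surjective ψ ∧ ∀ y y' : Y15, F15 y y' ↔ E15 (ψ y) (ψ y')) ∧
    ¬ ∃ φ : X15 → Y15, Function.Bijective φ ∧ ∀ x x' : X15, E15 x x' ↔ F15 (φ x) (φ x') := by
  refine ⟨⟨?_, ?_, ?_⟩, ⟨?_, ?_, ?_⟩, ?_, ?_, ?_⟩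
  · intro x; cases x <;> simp [E15]
  · intro x y h; cases x <;> cases y <;> simp_all [E15]
  · intro x y z h1 h2; cases x <;> cases y <;> cases z <;> simp_all [E15]
  · intro x; cases x <;> simp [F15]
  · intro x y h; cases x <;> cases y <;> simp_all [F15]
  · intro x y z h1 h2; cases x <;> cases y <;> cases z <;> simp_all [F15]
  · refine ⟨phi15, ?_, ?_⟩
    · intro y
      rcases y with (_ | a) | ⟨n, k⟩
      · exact ⟨Sum.inr ⟨0, ⟨0, by omega⟩⟩, rfl⟩
      · exact ⟨Sum.inl a, rfl⟩
      · refine ⟨Sum.inr ⟨n + 1, ⟨k.val, by have := k.isLt; omega⟩⟩, ?_⟩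
        simp only [phi15]
        congr 1
        exact Sigma.ext rfl (heq_of_eq (Fin.ext (Nat.mod_eq_of_lt k.isLt)))
    · intro x x'
      rcases x with a | ⟨(_ | n), k⟩ <;> rcases x' with b | ⟨(_ | m), j⟩ <;>
        simp [E15, F15, phi15]
  · refine ⟨psi15, ?_, ?_⟩
    · intro x
      rcases x with a | ⟨n, k⟩
      · exact ⟨Sum.inl a, rfl⟩
      · refine ⟨Sum.inr ⟨n, ⟨k.val, by have := k.isLt; omega⟩⟩, ?_⟩
        simp only [psi15]
        congr 1
        exact Sigma.ext rfl (heq_of_eq (Fin.ext (Nat.mod_eq_of_lt k.isLt)))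
    · intro y y'
      rcases y with a | ⟨n, k⟩ <;> rcases y' with b | ⟨m, j⟩ <;> simp [E15, F15, psi15]
  · rintro ⟨φ, ⟨hinj, hsurj⟩, hred⟩
    set x0 : X15 := Sum.inr ⟨0, ⟨0, by omega⟩⟩ with hx0
    set x1 : X15 := Sum.inr ⟨0, ⟨1, by omega⟩⟩ with hx1
    have h01 : E15 x0 x1 := rfl
    have hF : F15 (φ x0) (φ x1) := (hred _ _).mp h01
    rcases h0 : φ x0 with a | ⟨m, km⟩
    · -- φ x0 is a singleton class; then φ x1 must equal it, contradicting injectivity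
      rcases h1 : φ x1 with b | ⟨m', km'⟩
      · rw [h0, h1] at hF
        have hab : a = b := hF
        have : x0 = x1 := hinj (by rw [h0, h1, hab])
        simp [hx0, hx1, X15] at this
      · rw [h0, h1] at hF; exact hF.elim
    · -- φ x0 is in a class of size 2m+3 ≥ 3; pigeonhole
      have key : ∀ i : Fin (2 * m + 3), ∃ k : Fin 2,
          φ (Sum.inr ⟨0, k⟩) = Sum.inr ⟨m, i⟩ := by
        intro i
        obtain ⟨x, hx⟩ := hsurj (Sum.inr ⟨m, i⟩)
        have hEx : E15 x x0 := by
          apply (hred x x0).mpr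
          rw [hx, h0]
          show m = m
          rfl
        rcases x with c | ⟨n, k⟩
        · exact hEx.elim
        · have hn : n = 0 := hEx
          subst hn
          exact ⟨k, hx⟩
      obtain ⟨k0, hk0⟩ := key ⟨0, by omega⟩
      obtain ⟨k1, hk1⟩ := key ⟨1, by omega⟩
      obtain ⟨k2, hk2⟩ := key ⟨2, by omega⟩
      have hne : ∀ (i j : Fin 2) (a b : Fin (2 * m + 3)),
          φ (Sum.inr ⟨0, i⟩) = Sum.inr ⟨m, a⟩ → φ (Sum.inr ⟨0, j⟩) = Sum.inr ⟨m, b⟩ →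
          i = j → a = b := by
        intro i j a b hi hj hij
        subst hij
        rw [hi] at hj
        simpa [Y15] using hj
      have h0' := k0.isLt
      have h1' := k1.isLt
      have h2' := k2.isLt
      have : k0.val = k1.val ∨ k0.val = k2.val ∨ k1.val = k2.val := by omega
      rcases this with h | h | h
      · have := hne k0 k1 _ _ hk0 hk1 (Fin.ext h); simp [Fin.ext_iff] at this
      · have := hne k0 k2 _ _ hk0 hk2 (Fin.ext h); simp [Fin.ext_iff] at this
      · have := hne k1 k2 _ _ hk1 hk2 (Fin.ext h); simp [Fin.ext_iff] at this
end

section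
/- Let E and F be equivalence relations on finite sets X and Y. Then there exists an injective reduction from E to F if and only if for every positive integer k, the number of E-classes of size at least k is at most the number of F-classes of size at least k. -/
universe u

/-- Combinatorial core: a "dominance" matching exists when the counting condition holds. -/
theorem hall_sizes {α β : Type*} [DecidableEq α] [DecidableEq β] [Nonempty β]
    (s : α → ℕ) (t : β → ℕ) :
    ∀ (n : ℕ) (A : Finset α) (B : Finset β), A.card = n →
      (∀ a ∈ A, 1 ≤ s a) →
      (∀ k : ℕ, 1 ≤ k →
        (A.filter (fun a => k ≤ s a)).card ≤ (B.filter (fun b => k ≤ t b)).card) →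
      ∃ g : α → β, Set.InjOn g ↑A ∧ ∀ a ∈ A, g a ∈ B ∧ s a ≤ t (g a) := by
  intro n
  induction n with
  | zero =>
    intro A B hcard _ _
    refine ⟨fun _ => Classical.arbitrary β, ?_, ?_⟩
    · intro x hx
      simp [Finset.card_eq_zero.mp hcard] at hx
    · intro a ha
      simp [Finset.card_eq_zero.mp hcard] at ha
  | succ n ih =>
    intro A B hcard h1 hcount
    have hAne : A.Nonempty := Finset.card_pos.mp (by omega)
    obtain ⟨a, haA, hamax⟩ := A.exists_max_image s hAne
    -- find b ∈ B with s a ≤ t b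
    have hsa : 1 ≤ s a := h1 a haA
    have hfa : (A.filter (fun a' => s a ≤ s a')).Nonempty :=
      ⟨a, Finset.mem_filter.mpr ⟨haA, le_refl _⟩⟩
    have hBf : (B.filter (fun b => s a ≤ t b)).Nonempty := by
      have := hcount (s a) hsa
      have := Finset.card_pos.mpr hfa
      exact Finset.card_pos.mp (by omega)
    obtain ⟨b, hbB'⟩ := hBf
    obtain ⟨hbB, hsatb⟩ := Finset.mem_filter.mp hbB'
    -- apply IH to erased sets
    have hcard' : (A.erase a).card = n := by
      rw [Finset.card_erase_of_mem haA]; omega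
    have hcount' : ∀ k : ℕ, 1 ≤ k →
        ((A.erase a).filter (fun a' => k ≤ s a')).card ≤
          ((B.erase b).filter (fun b' => k ≤ t b')).card := by
      intro k hk
      rw [Finset.filter_erase, Finset.filter_erase]
      by_cases hks : k ≤ s a
      · have haf : a ∈ A.filter (fun a' => k ≤ s a') :=
          Finset.mem_filter.mpr ⟨haA, hks⟩
        have hbf : b ∈ B.filter (fun b' => k ≤ t b') :=
          Finset.mem_filter.mpr ⟨hbB, le_trans hks hsatb⟩
        rw [Finset.card_erase_of_mem haf, Finset.card_erase_of_mem hbf]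
        have := hcount k hk
        omega
      · have : A.filter (fun a' => k ≤ s a') = ∅ := by
          apply Finset.filter_eq_empty_iff.mpr
          intro a' ha'
          have := hamax a' ha'
          omega
        rw [this]
        simp
    obtain ⟨g, hginj, hg⟩ := ih (A.erase a) (B.erase b) hcard'
      (fun a' ha' => h1 a' (Finset.mem_of_mem_erase ha')) hcount'
    refine ⟨Function.update g a b, ?_, ?_⟩
    · intro x hx y hy hxy
      by_cases hxa : x = a <;> by_cases hya : y = a
      · rw [hxa, hya]
      · exfalso
        rw [hxa] at hxy
        rw [Function.update_self, Function.update_of_ne hya] at hxy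
        have := (hg y (Finset.mem_erase.mpr ⟨hya, Finset.mem_coe.mp hy⟩)).1
        rw [← hxy] at this
        exact (Finset.mem_erase.mp this).1 rfl
      · exfalso
        rw [hya] at hxy
        rw [Function.update_self, Function.update_of_ne hxa] at hxy
        have := (hg x (Finset.mem_erase.mpr ⟨hxa, Finset.mem_coe.mp hx⟩)).1
        rw [hxy] at this
        exact (Finset.mem_erase.mp this).1 rfl
      · rw [Function.update_of_ne hxa, Function.update_of_ne hya] at hxy
        exact hginj (Finset.mem_coe.mpr (Finset.mem_erase.mpr ⟨hxa, Finset.mem_coe.mp hx⟩))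
          (Finset.mem_coe.mpr (Finset.mem_erase.mpr ⟨hya, Finset.mem_coe.mp hy⟩)) hxy
    · intro a' ha'
      by_cases hx : a' = a
      · rw [hx, Function.update_self]
        exact ⟨hbB, hsatb⟩
      · rw [Function.update_of_ne hx]
        obtain ⟨hm, hle⟩ := hg a' (Finset.mem_erase.mpr ⟨hx, ha'⟩)
        exact ⟨Finset.mem_of_mem_erase hm, hle⟩

theorem stmt19 {X Y : Type u} [Fintype X] [Fintype Y]
    (E : X → X → Prop) (F : Y → Y → Prop)
    (hE : Equivalence E) (hF : Equivalence F) :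
    (∃ φ : X → Y, Function.Injective φ ∧ ∀ x x' : X, E x x' ↔ F (φ x) (φ x')) ↔
      ∀ k : ℕ, 0 < k → nGe E (k : Cardinal.{u}) ≤ nGe F (k : Cardinal.{u}) := by
  classical
  -- basic facts about classes
  have clsE_eq : ∀ x x' : X, E x x' → ({y | E x y} : Set X) = {y | E x' y} := by
    intro x x' hxx'
    ext y
    exact ⟨fun h => hE.trans (hE.symm hxx') h, fun h => hE.trans hxx' h⟩
  have clsF_eq : ∀ y y' : Y, F y y' → ({z | F y z} : Set Y) = {z | F y' z} := by
    intro y y' hyy'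
    ext z
    exact ⟨fun h => hF.trans (hF.symm hyy') h, fun h => hF.trans hyy' h⟩
  have classF_unique : ∀ D D' : Set Y, D ∈ EqClasses F → D' ∈ EqClasses F →
      ∀ z, z ∈ D → z ∈ D' → D = D' := by
    rintro D D' ⟨y, rfl⟩ ⟨y', rfl⟩ z hz hz'
    rw [clsF_eq y z hz, clsF_eq y' z hz']
  have classF_rel : ∀ D : Set Y, D ∈ EqClasses F → ∀ u v, u ∈ D → v ∈ D → F u v := by
    rintro D ⟨y, rfl⟩ u v hu hv
    exact hF.trans (hF.symm hu) hv
  constructor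
  · -- forward direction
    rintro ⟨φ, hinj, hred⟩ k hk
    rw [nGe, nGe, Cardinal.le_def]
    refine ⟨⟨fun p => ⟨{y | F (φ p.2.1.choose) y}, ⟨φ p.2.1.choose, rfl⟩, ?_⟩, ?_⟩⟩
    · obtain ⟨C, hC, hCk⟩ := p
      have hCeq : C = {y | E hC.choose y} := hC.choose_spec
      refine le_trans hCk ?_
      have : ∀ c : C, φ (c : X) ∈ {y | F (φ hC.choose) y} := by
        rintro ⟨c, hc⟩
        rw [hCeq] at hc
        exact (hred _ _).mp hc
      exact Cardinal.mk_le_of_injective (f := fun c : C => (⟨φ c, this c⟩ : {y | F (φ hC.choose) y}))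
        (fun c c' h => Subtype.ext (hinj (congrArg Subtype.val h)))
    · rintro ⟨C, hC, hCk⟩ ⟨C', hC', hC'k⟩ h
      simp only [Subtype.mk.injEq] at h
      apply Subtype.ext
      simp only
      set x := hC.choose with hxdef
      set x' := hC'.choose with hx'def
      have hCeq : C = {y | E x y} := hC.choose_spec
      have hC'eq : C' = {y | E x' y} := hC'.choose_spec
      have hφx' : φ x' ∈ {y | F (φ x) y} := by
        rw [h]
        exact hF.refl _
      have : E x x' := (hred x x').mpr hφx'
      rw [hCeq, hC'eq, clsE_eq x x' this]
  · -- backward direction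
    intro hyp
    have finX : ∀ C : Set X, Finite C := fun C => Set.toFinite C
    have finY : ∀ D : Set Y, Finite D := fun D => Set.toFinite D
    -- classes as finsets
    set A : Finset (Set X) := (Set.toFinite (EqClasses E)).toFinset with hA
    set B : Finset (Set Y) := (Set.toFinite (EqClasses F)).toFinset with hB
    have memA : ∀ C : Set X, C ∈ A ↔ C ∈ EqClasses E := fun C => Set.Finite.mem_toFinset _
    have memB : ∀ D : Set Y, D ∈ B ↔ D ∈ EqClasses F := fun D => Set.Finite.mem_toFinset _
    -- cardinal vs Nat.card
    have mk_nat : ∀ {Z : Type u} [Finite Z] (k : ℕ), ((k : Cardinal) ≤ Cardinal.mk Z ↔ k ≤ Nat.card Z) := by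
      intro Z _ k
      have : Fintype Z := Fintype.ofFinite Z
      rw [Cardinal.mk_fintype, Nat.card_eq_fintype_card, Nat.cast_le]
    -- the counting hypothesis in Finset form
    have hcount : ∀ k : ℕ, 1 ≤ k →
        (A.filter (fun C : Set X => k ≤ Nat.card ↥C)).card ≤ (B.filter (fun D : Set Y => k ≤ Nat.card ↥D)).card := by
      intro k hk
      have h := hyp k hk
      rw [nGe, nGe, Cardinal.le_def] at h
      obtain ⟨f⟩ := h
      have e1 : {C : Set X // C ∈ A.filter (fun C : Set X => k ≤ Nat.card ↥C)} ≃
          {C : Set X // C ∈ EqClasses E ∧ (k : Cardinal) ≤ Cardinal.mk C} := by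
        apply Equiv.subtypeEquivRight
        intro C
        rw [Finset.mem_filter, memA, mk_nat]
      have e2 : {D : Set Y // D ∈ B.filter (fun D : Set Y => k ≤ Nat.card ↥D)} ≃
          {D : Set Y // D ∈ EqClasses F ∧ (k : Cardinal) ≤ Cardinal.mk D} := by
        apply Equiv.subtypeEquivRight
        intro D
        rw [Finset.mem_filter, memB, mk_nat]
      have : Fintype {C : Set X // C ∈ EqClasses E ∧ (k : Cardinal) ≤ Cardinal.mk C} :=
        Fintype.ofFinite _
      have : Fintype {D : Set Y // D ∈ EqClasses F ∧ (k : Cardinal) ≤ Cardinal.mk D} :=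
        Fintype.ofFinite _
      calc (A.filter (fun C : Set X => k ≤ Nat.card ↥C)).card
          = Fintype.card {C : Set X // C ∈ A.filter (fun C : Set X => k ≤ Nat.card ↥C)} :=
            (Fintype.card_coe _).symm
        _ = Fintype.card {C : Set X // C ∈ EqClasses E ∧ (k : Cardinal) ≤ Cardinal.mk C} :=
            Fintype.card_congr e1
        _ ≤ Fintype.card {D : Set Y // D ∈ EqClasses F ∧ (k : Cardinal) ≤ Cardinal.mk D} :=
            Fintype.card_le_of_embedding f
        _ = Fintype.card {D : Set Y // D ∈ B.filter (fun D : Set Y => k ≤ Nat.card ↥D)} :=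
            (Fintype.card_congr e2).symm
        _ = (B.filter (fun D : Set Y => k ≤ Nat.card ↥D)).card := Fintype.card_coe _
    have h1 : ∀ C ∈ A, 1 ≤ Nat.card ↥C := by
      intro C hC
      obtain ⟨x, rfl⟩ := (memA C).mp hC
      have : Nonempty ({y | E x y} : Set X) := ⟨⟨x, hE.refl x⟩⟩
      exact Nat.card_pos
    obtain ⟨g, hginj, hg⟩ := hall_sizes (fun C : Set X => Nat.card ↥C)
      (fun D : Set Y => Nat.card ↥D) A.card A B rfl h1 hcount
    -- embeddings from each class into its image
    have key : ∀ C : Set X, C ∈ A → Nonempty (C ↪ (g C : Set Y)) := by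
      intro C hC
      have hle : Nat.card ↥C ≤ Nat.card ↥(g C : Set Y) := (hg C hC).2
      have : Fintype C := Fintype.ofFinite _
      have : Fintype (g C : Set Y) := Fintype.ofFinite _
      apply Function.Embedding.nonempty_of_card_le
      rwa [← Nat.card_eq_fintype_card, ← Nat.card_eq_fintype_card]
    let ι : (C : Set X) → C ∈ A → (C ↪ (g C : Set Y)) := fun C hC => (key C hC).some
    have memcls : ∀ x : X, ({y | E x y} : Set X) ∈ A := fun x => (memA _).mpr ⟨x, rfl⟩
    let φ : X → Y := fun x => (ι {y | E x y} (memcls x) ⟨x, hE.refl x⟩ : Y)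
    have hφmem : ∀ x : X, φ x ∈ g {y | E x y} := fun x =>
      (ι {y | E x y} (memcls x) ⟨x, hE.refl x⟩).2
    have hgclass : ∀ x : X, g ({y | E x y}) ∈ EqClasses F := fun x =>
      (memB _).mp (hg _ (memcls x)).1
    -- g of the class of x is the F-class of φ x
    have hgcls : ∀ x : X, g ({y | E x y}) = {z | F (φ x) z} := by
      intro x
      exact classF_unique _ _ (hgclass x) ⟨φ x, rfl⟩ (φ x) (hφmem x) (hF.refl _)
    have hred : ∀ x x' : X, E x x' ↔ F (φ x) (φ x') := by
      intro x x'
      constructor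
      · intro h
        have hcc : ({y | E x y} : Set X) = {y | E x' y} := clsE_eq x x' h
        have : φ x' ∈ g {y | E x y} := by rw [hcc]; exact hφmem x'
        exact classF_rel _ (hgclass x) _ _ (hφmem x) this
      · intro h
        have h1 : g ({y | E x y}) = g ({y | E x' y}) := by
          rw [hgcls x, hgcls x', clsF_eq _ _ h]
        have hcc : ({y | E x y} : Set X) = {y | E x' y} :=
          hginj (Finset.mem_coe.mpr (memcls x)) (Finset.mem_coe.mpr (memcls x')) h1
        have : x' ∈ ({y | E x y} : Set X) := by rw [hcc]; exact hE.refl x'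
        exact this
    refine ⟨φ, ?_, hred⟩
    -- injectivity
    intro x x' h
    have hxx' : E x x' := (hred x x').mpr (by rw [h]; exact hF.refl _)
    have hcc : ({y | E x y} : Set X) = {y | E x' y} := clsE_eq x x' hxx'
    -- transfer along the class equality
    have main : ∀ (C C' : Set X) (hC : C ∈ A) (hC' : C' ∈ A) (hcc : C = C')
        (u : C) (v : C'), (ι C hC u : Y) = (ι C' hC' v : Y) → (u : X) = (v : X) := by
      rintro C C' hC hC' rfl u v huv
      have : ι C hC u = ι C hC' v := Subtype.ext huv
      have h2 : u = v := (ι C hC).injective this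
      rw [h2]
    exact main _ _ (memcls x) (memcls x') hcc ⟨x, hE.refl x⟩ ⟨x', hE.refl x'⟩ h
end
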